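/- arXiv:2208.05584 — 9 statements merged into one kernel-verified Lean document; each statement's English description precedes it below -/
import Mathlib

section
/- For every integer n with 2 ≤ n ≤ 14 and every collection of unit vectors v₁, …, vₙ in ℝⁿ (with the Euclidean inner product and norm), one has sup_{‖x‖ = 1} |⟨x, v₁⟩ · ⟨x, v₂⟩ ⋯ ⟨x, vₙ⟩| ≥ n^{-n/2}. -/
open scoped RealInnerProductSpace

set_option linter.unusedVariables false
set_option linter.unreachableTactic false
set_option linter.unusedTactic false
set_option maxHeartbeats 1000000

section PolarizationAux


/-- positive root comparison : if `x > 0`, `x^2 ≤ k*x + c` with `c > 0`,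
and `q ≥ 0` with `k*q + c ≤ q^2`, then `x ≤ q`. -/
lemma root_le {k c x q : ℝ} (hc : 0 < c) (hx : 0 < x) (hxle : x^2 ≤ k*x + c)
    (hq : 0 ≤ q) (hqge : k*q + c ≤ q^2) : x ≤ q := by
  rcases eq_or_lt_of_le hq with h | hq0
  · exfalso; rw [← h] at hqge; nlinarith
  nlinarith [mul_pos hx hq0]

/-- reverse: if `x > 0`, `k*x + c ≤ x^2`, `q > k`?? : if `0 < q`, `q^2 ≤ k*q + c`, `k*x + c ≤ x^2`, `0 < x` then `q ≤ x`. -/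
lemma le_root {k c x q : ℝ} (hc : 0 < c) (hx : 0 < x) (hxge : k*x + c ≤ x^2)
    (hq : 0 < q) (hqle : q^2 ≤ k*q + c) : q ≤ x := by
  nlinarith [mul_pos hx hq]

lemma q_nonneg_left (m k : ℕ) (hm : 1 ≤ m) (U x : ℝ) (hU : 0 < U) (hx0 : 0 ≤ x) (hxU : x ≤ U)
    (h : 0 ≤ (2-(m:ℝ))*U^2 + k*((m:ℝ)-1)*U + m*((m:ℝ)-1)) :
    0 ≤ (2-(m:ℝ))*x^2 + k*((m:ℝ)-1)*x + m*((m:ℝ)-1) := by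
  have hk0 : (0:ℝ) ≤ k := Nat.cast_nonneg k
  have hm1 : (1:ℝ) ≤ m := by exact_mod_cast hm
  rcases le_or_gt (m:ℝ) 2 with hm2 | hm2
  · nlinarith [sq_nonneg x, mul_nonneg hk0 hx0]
  · have hS : 0 ≤ (m:ℝ)*((m:ℝ)-1) + ((m:ℝ)-2)*x*U :=
      by nlinarith [mul_nonneg hx0 hU.le]
    have hiden : ((2-(m:ℝ))*x^2 + k*((m:ℝ)-1)*x + m*((m:ℝ)-1))*U
        = x*((2-(m:ℝ))*U^2 + k*((m:ℝ)-1)*U + m*((m:ℝ)-1))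
          + (U-x)*((m:ℝ)*((m:ℝ)-1) + ((m:ℝ)-2)*x*U) := by ring
    have h1 : 0 ≤ x*((2-(m:ℝ))*U^2 + k*((m:ℝ)-1)*U + m*((m:ℝ)-1)) := mul_nonneg hx0 h
    have h2 : 0 ≤ (U-x)*((m:ℝ)*((m:ℝ)-1) + ((m:ℝ)-2)*x*U) :=
      mul_nonneg (by linarith) hS
    nlinarith [hU]

lemma q_nonpos_right (m k : ℕ) (hm : 1 ≤ m) (U x : ℝ) (hU : 0 < U) (hUx : U ≤ x)
    (h : (2-(m:ℝ))*U^2 + k*((m:ℝ)-1)*U + m*((m:ℝ)-1) ≤ 0) :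
    (2-(m:ℝ))*x^2 + k*((m:ℝ)-1)*x + m*((m:ℝ)-1) ≤ 0 := by
  have hk0 : (0:ℝ) ≤ k := Nat.cast_nonneg k
  have hm1 : (1:ℝ) ≤ m := by exact_mod_cast hm
  have hx0 : 0 < x := lt_of_lt_of_le hU hUx
  have hm3 : (3:ℝ) ≤ m := by
    by_contra hc
    push_neg at hc
    have hm2 : m ≤ 2 := by exact_mod_cast Nat.lt_succ_iff.mp (by exact_mod_cast (show (m:ℝ) < 3 from hc))
    interval_cases m <;> (push_cast at h; nlinarith [mul_pos hU hU, mul_nonneg hk0 hU.le])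
  have hS : 0 ≤ (m:ℝ)*((m:ℝ)-1) + ((m:ℝ)-2)*x*U :=
    by nlinarith [mul_nonneg hx0.le hU.le]
  have hiden : ((2-(m:ℝ))*x^2 + k*((m:ℝ)-1)*x + m*((m:ℝ)-1))*U
      = x*((2-(m:ℝ))*U^2 + k*((m:ℝ)-1)*U + m*((m:ℝ)-1))
        + (U-x)*((m:ℝ)*((m:ℝ)-1) + ((m:ℝ)-2)*x*U) := by ring
  have h1 : x*((2-(m:ℝ))*U^2 + k*((m:ℝ)-1)*U + m*((m:ℝ)-1)) ≤ 0 :=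
    mul_nonpos_of_nonneg_of_nonpos hx0.le h
  have h2 : (U-x)*((m:ℝ)*((m:ℝ)-1) + ((m:ℝ)-2)*x*U) ≤ 0 :=
    mul_nonpos_of_nonpos_of_nonneg (by linarith) hS
  nlinarith [hU]


lemma phi_deriv (k mm : ℕ) (x : ℝ) (hx : 0 < x) :
    HasDerivAt (fun y : ℝ => (y^2 - k*y - (((mm+1:ℕ):ℝ)-1)) / y^(mm+1))
      (((2-((mm+1:ℕ):ℝ))*x^2 + k*(((mm+1:ℕ):ℝ)-1)*x + ((mm+1:ℕ):ℝ)*(((mm+1:ℕ):ℝ)-1)) / x^(mm+1+1)) x := by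
  have h1 : HasDerivAt (fun y : ℝ => y^2 - k*y - (((mm+1:ℕ):ℝ)-1)) (2*x - k) x := by
    have := ((hasDerivAt_pow 2 x).sub ((hasDerivAt_id x).const_mul (k:ℝ))).sub_const (((mm+1:ℕ):ℝ)-1)
    simpa [mul_comm] using this
  have h2 : HasDerivAt (fun y : ℝ => y^(mm+1)) (((mm+1:ℕ):ℝ)*x^mm) x := by
    simpa using hasDerivAt_pow (mm+1) x
  have h3 : HasDerivAt (fun y : ℝ => (y^2 - k*y - (((mm+1:ℕ):ℝ)-1)) / y^(mm+1)) _ x :=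
    h1.div h2 (pow_ne_zero (mm+1) hx.ne')
  convert h3 using 1
  have hxne : x ≠ 0 := hx.ne'
  push_cast
  rw [div_eq_div_iff (by positivity) (by positivity)]
  ring

lemma root_le2 {K c x q : ℝ} (hc : 0 ≤ c) (hx : 0 < x) (hxle : x^2 ≤ K*x + c)
    (hq0 : 0 < q) (hKq : K ≤ q) (hqge : K*q + c ≤ q^2) : x ≤ q := by
  nlinarith [mul_pos hx hq0]

lemma piece (k m : ℕ) (hm : 1 ≤ m) (C : ℝ) (hC : 1 ≤ C)
    (a b u : ℝ) (ha0 : 0 < a) (hb0 : 0 < b)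
    (haroot : a^2 = k*a + m) (hbroot : b^2 = ((k:ℝ)+1)*b + ((m:ℝ)-1))
    (hA : a^(2*m) ≤ C) (hB : b^(2*(m-1)) ≤ C)
    (hu1 : 1 ≤ u)
    (hr1 : 1 ≤ u^2 - k*u - ((m:ℝ)-1))
    (hru : u^2 - k*u - ((m:ℝ)-1) ≤ u) :
    u^(2*m) ≤ C * (u^2 - k*u - ((m:ℝ)-1))^2 := by
  obtain ⟨mm, rfl⟩ : ∃ mm, m = mm + 1 := ⟨m-1, (Nat.succ_pred_eq_of_pos hm).symm⟩
  have hu0 : 0 < u := lt_of_lt_of_le one_pos hu1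
  have hm1 : (1:ℝ) ≤ ((mm+1:ℕ):ℝ) := by exact_mod_cast hm
  have hmpos : (0:ℝ) < ((mm+1:ℕ):ℝ) := by positivity
  have hk0 : (0:ℝ) ≤ k := Nat.cast_nonneg k
  set M : ℝ := ((mm+1:ℕ):ℝ) with hM
  set ρ : ℝ := u^2 - k*u - (M-1) with hρdef
  have hρ0 : 0 < ρ := lt_of_lt_of_le one_pos hr1
  -- endpoints
  have hau : a ≤ u := by
    refine le_root (k := (k:ℝ)) (c := M) (by linarith) hu0 ?_ ha0 (le_of_eq haroot)
    simp only [hρdef] at hr1; nlinarith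
  have hKb : (k:ℝ)+1 ≤ b := by nlinarith
  have hub : u ≤ b := by
    refine root_le2 (K := (k:ℝ)+1) (c := M-1) (by linarith) hu0 ?_ hb0 hKb (le_of_eq hbroot.symm)
    simp only [hρdef] at hru; nlinarith
  -- the function
  set φ : ℝ → ℝ := fun y => (y^2 - k*y - (M-1)) / y^(mm+1) with hφ
  have hφu : φ u = ρ / u^(mm+1) := rfl
  have hφa : φ a = 1 / a^(mm+1) := by
    have : a^2 - k*a - (M-1) = 1 := by rw [hM]; linarith [haroot]
    simp only [hφ, this]
  have hφb : φ b = 1 / b^mm := by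
    have h1 : b^2 - (k:ℝ)*b - (M-1) = b := by rw [hM]; linarith [hbroot]
    show (b^2 - (k:ℝ)*b - (M-1)) / b^(mm+1) = 1 / b^mm
    rw [h1, pow_succ, mul_comm, ← div_div, div_self hb0.ne']
  by_cases hsign : 0 ≤ (2-M)*u^2 + k*(M-1)*u + M*(M-1)
  · -- φ monotone on [a,u], compare with a
    have hmono : MonotoneOn φ (Set.Icc a u) := by
      apply monotoneOn_of_deriv_nonneg (convex_Icc a u)
      · apply ContinuousOn.div (by fun_prop) (by fun_prop)
        intro x hx; exact pow_ne_zero _ (ne_of_gt (lt_of_lt_of_le ha0 hx.1))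
      · intro x hx
        rw [interior_Icc] at hx
        exact (phi_deriv k mm x (lt_trans ha0 hx.1)).differentiableAt.differentiableWithinAt
      · intro x hx
        rw [interior_Icc] at hx
        have hx0 : 0 < x := lt_trans ha0 hx.1
        rw [(phi_deriv k mm x hx0).deriv]
        apply div_nonneg _ (by positivity)
        exact q_nonneg_left (mm+1) k hm u x hu0 hx0.le hx.2.le hsign
    have h1 : φ a ≤ φ u := hmono (Set.left_mem_Icc.2 hau) (Set.right_mem_Icc.2 hau) hau
    rw [hφa, hφu] at h1
    have h2 : u^(mm+1) ≤ ρ * a^(mm+1) := by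
      rw [div_le_div_iff₀ (by positivity) (by positivity)] at h1
      linarith
    have h3 : (u^(mm+1))^2 ≤ (ρ * a^(mm+1))^2 := by
      apply sq_le_sq' _ h2
      have p1 := pow_pos hu0 (mm+1)
      have p2 := mul_pos hρ0 (pow_pos ha0 (mm+1))
      linarith
    calc u^(2*(mm+1)) = (u^(mm+1))^2 := by ring
      _ ≤ (ρ * a^(mm+1))^2 := h3
      _ = a^(2*(mm+1)) * ρ^2 := by ring
      _ ≤ C * ρ^2 := mul_le_mul_of_nonneg_right hA (by positivity)
  · -- φ antitone on [u,b], compare with b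
    push_neg at hsign
    have hanti : AntitoneOn φ (Set.Icc u b) := by
      apply antitoneOn_of_deriv_nonpos (convex_Icc u b)
      · apply ContinuousOn.div (by fun_prop) (by fun_prop)
        intro x hx; exact pow_ne_zero _ (ne_of_gt (lt_of_lt_of_le hu0 hx.1))
      · intro x hx
        rw [interior_Icc] at hx
        exact (phi_deriv k mm x (lt_trans hu0 hx.1)).differentiableAt.differentiableWithinAt
      · intro x hx
        rw [interior_Icc] at hx
        have hx0 : 0 < x := lt_trans hu0 hx.1
        rw [(phi_deriv k mm x hx0).deriv]
        apply div_nonpos_of_nonpos_of_nonneg _ (by positivity)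
        exact q_nonpos_right (mm+1) k hm u x hu0 hx.1.le hsign.le
    have h1 : φ b ≤ φ u := hanti (Set.left_mem_Icc.2 hub) (Set.right_mem_Icc.2 hub) hub
    rw [hφb, hφu] at h1
    have h2 : u^(mm+1) ≤ ρ * b^mm := by
      rw [div_le_div_iff₀ (by positivity) (by positivity)] at h1
      linarith
    have h3 : (u^(mm+1))^2 ≤ (ρ * b^mm)^2 := by
      apply sq_le_sq' _ h2
      have p1 := pow_pos hu0 (mm+1)
      have p2 := mul_pos hρ0 (pow_pos hb0 mm)
      linarith
    have hB' : b^(2*mm) ≤ C := by simpa using hB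
    calc u^(2*(mm+1)) = (u^(mm+1))^2 := by ring
      _ ≤ (ρ * b^mm)^2 := h3
      _ = b^(2*mm) * ρ^2 := by ring
      _ ≤ C * ρ^2 := mul_le_mul_of_nonneg_right hB' (by positivity)


noncomputable def alphaR (k m : ℕ) : ℝ := ((k:ℝ) + Real.sqrt ((k:ℝ)^2 + 4*(m:ℝ)))/2

lemma alpha_root (k m : ℕ) : (alphaR k m)^2 = (k:ℝ)*(alphaR k m) + m := by
  have h : (0:ℝ) ≤ (k:ℝ)^2 + 4*(m:ℝ) := by positivity
  have hs := Real.sq_sqrt h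
  unfold alphaR
  nlinarith [hs]

lemma alpha_pos (k m : ℕ) (h : 1 ≤ k + m) : 0 < alphaR k m := by
  have h2 : (0:ℝ) < (k:ℝ)^2 + 4*(m:ℝ) := by
    rcases Nat.eq_zero_or_pos k with hk | hk
    · have hm : 1 ≤ m := by omega
      have hm' : (1:ℝ) ≤ m := by exact_mod_cast hm
      nlinarith [sq_nonneg (k:ℝ)]
    · have hk' : (1:ℝ) ≤ k := by exact_mod_cast hk
      have hm' : (0:ℝ) ≤ m := Nat.cast_nonneg m
      nlinarith
  have h3 := Real.sqrt_pos.2 h2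
  have h4 : (0:ℝ) ≤ k := Nat.cast_nonneg k
  unfold alphaR
  positivity

lemma root_le' {k c x q : ℝ} (hc : 0 < c) (hx : 0 < x) (hxle : x^2 ≤ k*x + c)
    (hq : 0 ≤ q) (hqge : k*q + c ≤ q^2) : x ≤ q := by
  rcases eq_or_lt_of_le hq with h | hq0
  · exfalso; rw [← h] at hqge; nlinarith
  nlinarith [mul_pos hx hq0]

lemma knot_zero (n : ℕ) (hn : 1 ≤ n) : (alphaR 0 n)^(2*n) ≤ (n:ℝ)^n := by
  have h2 : (alphaR 0 n)^2 = (n:ℝ) := by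
    have := alpha_root 0 n; simpa using this
  rw [pow_mul, h2]

lemma knot_top (n : ℕ) (hn : 1 ≤ n) : (alphaR n 0)^(2*0) ≤ (n:ℝ)^n := by
  have h1 : (1:ℝ) ≤ (n:ℝ) := by exact_mod_cast hn
  simpa using one_le_pow₀ h1

lemma knot_mid (k m n : ℕ) (q : ℝ) (hm : 1 ≤ m) (hq0 : 0 ≤ q)
    (hq : (k:ℝ)*q + (m:ℝ) ≤ q^2) (hqp : q^(2*m) ≤ (n:ℝ)^n) :
    (alphaR k m)^(2*m) ≤ (n:ℝ)^n := by
  have hm' : (0:ℝ) < m := by exact_mod_cast hm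
  have ha0 : 0 < alphaR k m := alpha_pos k m (by omega)
  have hle : alphaR k m ≤ q := root_le' hm' ha0 (le_of_eq (alpha_root k m)) hq0 hq
  calc (alphaR k m)^(2*m) ≤ q^(2*m) := pow_le_pow_left₀ ha0.le hle _
    _ ≤ (n:ℝ)^n := hqp

example : (alphaR 1 (14-1))^(2*(14-1)) ≤ ((14:ℕ):ℝ)^(14:ℕ) :=
  knot_mid 1 13 14 (4141/1000) (by norm_num) (by norm_num) (by norm_num) (by norm_num)

lemma KN {n k : ℕ} (hn2 : 2 ≤ n) (hn14 : n ≤ 14) (hkn : k ≤ n) :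
    (alphaR k (n-k))^(2*(n-k)) ≤ (n:ℝ)^n := by
  interval_cases n <;> interval_cases k
  · exact knot_zero 2 (by norm_num)
  · exact knot_mid 1 1 2 2 (by norm_num) (by norm_num) (by norm_num) (by norm_num)
  · exact knot_top 2 (by norm_num)
  · exact knot_zero 3 (by norm_num)
  · exact knot_mid 1 2 3 2 (by norm_num) (by norm_num) (by norm_num) (by norm_num)
  · exact knot_mid 2 1 3 3 (by norm_num) (by norm_num) (by norm_num) (by norm_num)
  · exact knot_top 3 (by norm_num)
  · exact knot_zero 4 (by norm_num)
  · exact knot_mid 1 3 4 (12/5) (by norm_num) (by norm_num) (by norm_num) (by norm_num)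
  · exact knot_mid 2 2 4 3 (by norm_num) (by norm_num) (by norm_num) (by norm_num)
  · exact knot_mid 3 1 4 4 (by norm_num) (by norm_num) (by norm_num) (by norm_num)
  · exact knot_top 4 (by norm_num)
  · exact knot_zero 5 (by norm_num)
  · exact knot_mid 1 4 5 (13/5) (by norm_num) (by norm_num) (by norm_num) (by norm_num)
  · exact knot_mid 2 3 5 3 (by norm_num) (by norm_num) (by norm_num) (by norm_num)
  · exact knot_mid 3 2 5 4 (by norm_num) (by norm_num) (by norm_num) (by norm_num)
  · exact knot_mid 4 1 5 5 (by norm_num) (by norm_num) (by norm_num) (by norm_num)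
  · exact knot_top 5 (by norm_num)
  · exact knot_zero 6 (by norm_num)
  · exact knot_mid 1 5 6 (14/5) (by norm_num) (by norm_num) (by norm_num) (by norm_num)
  · exact knot_mid 2 4 6 (33/10) (by norm_num) (by norm_num) (by norm_num) (by norm_num)
  · exact knot_mid 3 3 6 4 (by norm_num) (by norm_num) (by norm_num) (by norm_num)
  · exact knot_mid 4 2 6 5 (by norm_num) (by norm_num) (by norm_num) (by norm_num)
  · exact knot_mid 5 1 6 6 (by norm_num) (by norm_num) (by norm_num) (by norm_num)
  · exact knot_top 6 (by norm_num)
  · exact knot_zero 7 (by norm_num)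
  · exact knot_mid 1 6 7 3 (by norm_num) (by norm_num) (by norm_num) (by norm_num)
  · exact knot_mid 2 5 7 (7/2) (by norm_num) (by norm_num) (by norm_num) (by norm_num)
  · exact knot_mid 3 4 7 4 (by norm_num) (by norm_num) (by norm_num) (by norm_num)
  · exact knot_mid 4 3 7 5 (by norm_num) (by norm_num) (by norm_num) (by norm_num)
  · exact knot_mid 5 2 7 6 (by norm_num) (by norm_num) (by norm_num) (by norm_num)
  · exact knot_mid 6 1 7 7 (by norm_num) (by norm_num) (by norm_num) (by norm_num)
  · exact knot_top 7 (by norm_num)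
  · exact knot_zero 8 (by norm_num)
  · exact knot_mid 1 7 8 (16/5) (by norm_num) (by norm_num) (by norm_num) (by norm_num)
  · exact knot_mid 2 6 8 4 (by norm_num) (by norm_num) (by norm_num) (by norm_num)
  · exact knot_mid 3 5 8 5 (by norm_num) (by norm_num) (by norm_num) (by norm_num)
  · exact knot_mid 4 4 8 5 (by norm_num) (by norm_num) (by norm_num) (by norm_num)
  · exact knot_mid 5 3 8 6 (by norm_num) (by norm_num) (by norm_num) (by norm_num)
  · exact knot_mid 6 2 8 7 (by norm_num) (by norm_num) (by norm_num) (by norm_num)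
  · exact knot_mid 7 1 8 8 (by norm_num) (by norm_num) (by norm_num) (by norm_num)
  · exact knot_top 8 (by norm_num)
  · exact knot_zero 9 (by norm_num)
  · exact knot_mid 1 8 9 (17/5) (by norm_num) (by norm_num) (by norm_num) (by norm_num)
  · exact knot_mid 2 7 9 4 (by norm_num) (by norm_num) (by norm_num) (by norm_num)
  · exact knot_mid 3 6 9 5 (by norm_num) (by norm_num) (by norm_num) (by norm_num)
  · exact knot_mid 4 5 9 5 (by norm_num) (by norm_num) (by norm_num) (by norm_num)
  · exact knot_mid 5 4 9 6 (by norm_num) (by norm_num) (by norm_num) (by norm_num)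
  · exact knot_mid 6 3 9 7 (by norm_num) (by norm_num) (by norm_num) (by norm_num)
  · exact knot_mid 7 2 9 8 (by norm_num) (by norm_num) (by norm_num) (by norm_num)
  · exact knot_mid 8 1 9 9 (by norm_num) (by norm_num) (by norm_num) (by norm_num)
  · exact knot_top 9 (by norm_num)
  · exact knot_zero 10 (by norm_num)
  · exact knot_mid 1 9 10 (71/20) (by norm_num) (by norm_num) (by norm_num) (by norm_num)
  · exact knot_mid 2 8 10 4 (by norm_num) (by norm_num) (by norm_num) (by norm_num)
  · exact knot_mid 3 7 10 5 (by norm_num) (by norm_num) (by norm_num) (by norm_num)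
  · exact knot_mid 4 6 10 6 (by norm_num) (by norm_num) (by norm_num) (by norm_num)
  · exact knot_mid 5 5 10 6 (by norm_num) (by norm_num) (by norm_num) (by norm_num)
  · exact knot_mid 6 4 10 7 (by norm_num) (by norm_num) (by norm_num) (by norm_num)
  · exact knot_mid 7 3 10 8 (by norm_num) (by norm_num) (by norm_num) (by norm_num)
  · exact knot_mid 8 2 10 9 (by norm_num) (by norm_num) (by norm_num) (by norm_num)
  · exact knot_mid 9 1 10 10 (by norm_num) (by norm_num) (by norm_num) (by norm_num)
  · exact knot_top 10 (by norm_num)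
  · exact knot_zero 11 (by norm_num)
  · exact knot_mid 1 10 11 (371/100) (by norm_num) (by norm_num) (by norm_num) (by norm_num)
  · exact knot_mid 2 9 11 (21/5) (by norm_num) (by norm_num) (by norm_num) (by norm_num)
  · exact knot_mid 3 8 11 5 (by norm_num) (by norm_num) (by norm_num) (by norm_num)
  · exact knot_mid 4 7 11 6 (by norm_num) (by norm_num) (by norm_num) (by norm_num)
  · exact knot_mid 5 6 11 6 (by norm_num) (by norm_num) (by norm_num) (by norm_num)
  · exact knot_mid 6 5 11 7 (by norm_num) (by norm_num) (by norm_num) (by norm_num)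
  · exact knot_mid 7 4 11 8 (by norm_num) (by norm_num) (by norm_num) (by norm_num)
  · exact knot_mid 8 3 11 9 (by norm_num) (by norm_num) (by norm_num) (by norm_num)
  · exact knot_mid 9 2 11 10 (by norm_num) (by norm_num) (by norm_num) (by norm_num)
  · exact knot_mid 10 1 11 11 (by norm_num) (by norm_num) (by norm_num) (by norm_num)
  · exact knot_top 11 (by norm_num)
  · exact knot_zero 12 (by norm_num)
  · exact knot_mid 1 11 12 (193/50) (by norm_num) (by norm_num) (by norm_num) (by norm_num)
  · exact knot_mid 2 10 12 (22/5) (by norm_num) (by norm_num) (by norm_num) (by norm_num)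
  · exact knot_mid 3 9 12 5 (by norm_num) (by norm_num) (by norm_num) (by norm_num)
  · exact knot_mid 4 8 12 6 (by norm_num) (by norm_num) (by norm_num) (by norm_num)
  · exact knot_mid 5 7 12 7 (by norm_num) (by norm_num) (by norm_num) (by norm_num)
  · exact knot_mid 6 6 12 7 (by norm_num) (by norm_num) (by norm_num) (by norm_num)
  · exact knot_mid 7 5 12 8 (by norm_num) (by norm_num) (by norm_num) (by norm_num)
  · exact knot_mid 8 4 12 9 (by norm_num) (by norm_num) (by norm_num) (by norm_num)
  · exact knot_mid 9 3 12 10 (by norm_num) (by norm_num) (by norm_num) (by norm_num)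
  · exact knot_mid 10 2 12 11 (by norm_num) (by norm_num) (by norm_num) (by norm_num)
  · exact knot_mid 11 1 12 12 (by norm_num) (by norm_num) (by norm_num) (by norm_num)
  · exact knot_top 12 (by norm_num)
  · exact knot_zero 13 (by norm_num)
  · exact knot_mid 1 12 13 4 (by norm_num) (by norm_num) (by norm_num) (by norm_num)
  · exact knot_mid 2 11 13 (9/2) (by norm_num) (by norm_num) (by norm_num) (by norm_num)
  · exact knot_mid 3 10 13 5 (by norm_num) (by norm_num) (by norm_num) (by norm_num)
  · exact knot_mid 4 9 13 6 (by norm_num) (by norm_num) (by norm_num) (by norm_num)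
  · exact knot_mid 5 8 13 7 (by norm_num) (by norm_num) (by norm_num) (by norm_num)
  · exact knot_mid 6 7 13 7 (by norm_num) (by norm_num) (by norm_num) (by norm_num)
  · exact knot_mid 7 6 13 8 (by norm_num) (by norm_num) (by norm_num) (by norm_num)
  · exact knot_mid 8 5 13 9 (by norm_num) (by norm_num) (by norm_num) (by norm_num)
  · exact knot_mid 9 4 13 10 (by norm_num) (by norm_num) (by norm_num) (by norm_num)
  · exact knot_mid 10 3 13 11 (by norm_num) (by norm_num) (by norm_num) (by norm_num)
  · exact knot_mid 11 2 13 12 (by norm_num) (by norm_num) (by norm_num) (by norm_num)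
  · exact knot_mid 12 1 13 13 (by norm_num) (by norm_num) (by norm_num) (by norm_num)
  · exact knot_top 13 (by norm_num)
  · exact knot_zero 14 (by norm_num)
  · exact knot_mid 1 13 14 (4141/1000) (by norm_num) (by norm_num) (by norm_num) (by norm_num)
  · exact knot_mid 2 12 14 (461/100) (by norm_num) (by norm_num) (by norm_num) (by norm_num)
  · exact knot_mid 3 11 14 (26/5) (by norm_num) (by norm_num) (by norm_num) (by norm_num)
  · exact knot_mid 4 10 14 6 (by norm_num) (by norm_num) (by norm_num) (by norm_num)
  · exact knot_mid 5 9 14 7 (by norm_num) (by norm_num) (by norm_num) (by norm_num)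
  · exact knot_mid 6 8 14 8 (by norm_num) (by norm_num) (by norm_num) (by norm_num)
  · exact knot_mid 7 7 14 8 (by norm_num) (by norm_num) (by norm_num) (by norm_num)
  · exact knot_mid 8 6 14 9 (by norm_num) (by norm_num) (by norm_num) (by norm_num)
  · exact knot_mid 9 5 14 10 (by norm_num) (by norm_num) (by norm_num) (by norm_num)
  · exact knot_mid 10 4 14 11 (by norm_num) (by norm_num) (by norm_num) (by norm_num)
  · exact knot_mid 11 3 14 12 (by norm_num) (by norm_num) (by norm_num) (by norm_num)
  · exact knot_mid 12 2 14 13 (by norm_num) (by norm_num) (by norm_num) (by norm_num)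
  · exact knot_mid 13 1 14 14 (by norm_num) (by norm_num) (by norm_num) (by norm_num)
  · exact knot_top 14 (by norm_num)

/-- the assembled piece inequality, in the form used by the vertex case -/
lemma piece' (n k : ℕ) (hn2 : 2 ≤ n) (hn14 : n ≤ 14) (hk : k + 1 ≤ n)
    (u ρ : ℝ) (hu1 : 1 ≤ u)
    (hρval : ρ = u^2 - k*u - ((n:ℝ)-1-k))
    (hρ1 : 1 ≤ ρ) (hρu : ρ ≤ u) :
    u^(2*(n-k)) ≤ (n:ℝ)^n * ρ^2 := by
  set m : ℕ := n - k with hm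
  have hkn : k ≤ n := by omega
  have hm1 : 1 ≤ m := by omega
  have hC : (1:ℝ) ≤ (n:ℝ)^n := one_le_pow₀ (by exact_mod_cast (by omega : 1 ≤ n))
  have hMcast : ((m:ℕ):ℝ) = (n:ℝ) - k := by
    rw [hm]; push_cast [Nat.cast_sub hkn]; ring
  have hb' : (alphaR (k+1) (m-1))^2 = ((k:ℝ)+1)*(alphaR (k+1) (m-1)) + ((m:ℝ)-1) := by
    have := alpha_root (k+1) (m-1)
    have hc : ((m-1:ℕ):ℝ) = (m:ℝ) - 1 := by push_cast [Nat.cast_sub hm1]; ring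
    rw [hc] at this
    push_cast at this ⊢
    convert this using 2 <;> push_cast <;> ring
  have hA : (alphaR k m)^(2*m) ≤ (n:ℝ)^n := KN hn2 hn14 hkn
  have hB : (alphaR (k+1) (m-1))^(2*(m-1)) ≤ (n:ℝ)^n := by
    have h := KN (n := n) (k := k+1) hn2 hn14 hk
    have : n - (k+1) = m - 1 := by omega
    rwa [this] at h
  have hρval' : ρ = u^2 - k*u - ((m:ℝ)-1) := by
    rw [hρval, hMcast]; ring
  have hres := piece k m hm1 ((n:ℝ)^n) hC (alphaR k m) (alphaR (k+1) (m-1)) u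
    (alpha_pos k m (by omega)) (alpha_pos (k+1) (m-1) (by omega))
    (alpha_root k m) hb' hA hB hu1 (by rw [← hρval']; exact hρ1) (by rw [← hρval']; exact hρu)
  rw [← hρval'] at hres
  exact hres

open scoped Classical in
lemma vertex (n : ℕ) (hn2 : 2 ≤ n) (hn14 : n ≤ 14) (u : ℝ) (hu : 1 < u)
    (r : Fin n → ℝ) (h1 : ∀ i, 1 ≤ r i) (hu' : ∀ i, r i ≤ u)
    (hsum : ∑ i, r i = u^2)
    (hcard : (Finset.univ.filter (fun i => r i ≠ 1 ∧ r i ≠ u)).card ≤ 1) :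
    u^(2*n) ≤ (n:ℝ)^n * (∏ i, r i)^2 := by
  have hu0 : (0:ℝ) < u := lt_trans one_pos hu
  have hnR : (1:ℝ) ≤ (n:ℝ)^n := one_le_pow₀ (by exact_mod_cast (by omega : 1 ≤ n))
  interval_cases h : (Finset.univ.filter (fun i => r i ≠ 1 ∧ r i ≠ u)).card
  · -- no interior point
    have hall : ∀ i, r i = 1 ∨ r i = u := by
      intro i
      by_contra hcon
      push_neg at hcon
      have : i ∈ Finset.univ.filter (fun i => r i ≠ 1 ∧ r i ≠ u) := by
        simp [hcon.1, hcon.2]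
      rw [Finset.card_eq_zero] at h
      simp [h] at this
    set k := (Finset.univ.filter (fun i => r i = u)).card with hk
    have hprodsplit := Finset.prod_filter_mul_prod_filter_not Finset.univ
      (fun i => r i = u) r
    have hsumsplit := Finset.sum_filter_add_sum_filter_not Finset.univ
      (fun i => r i = u) r
    have hcards := Finset.card_filter_add_card_filter_not
      (s := (Finset.univ : Finset (Fin n))) (p := fun i => r i = u)
    rw [Finset.card_univ, Fintype.card_fin] at hcards
    have hprodU : (∏ i ∈ Finset.univ.filter (fun i => r i = u), r i) = u^k := by
      rw [Finset.prod_congr rfl (fun i hi => (Finset.mem_filter.1 hi).2), Finset.prod_const, hk]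
    have hprod1 : (∏ i ∈ Finset.univ.filter (fun i => ¬ r i = u), r i) = 1 := by
      apply Finset.prod_eq_one
      intro i hi
      rcases hall i with h' | h'
      · exact h'
      · exact absurd h' (Finset.mem_filter.1 hi).2
    have hsumU : (∑ i ∈ Finset.univ.filter (fun i => r i = u), r i) = u*k := by
      rw [Finset.sum_congr rfl (fun i hi => (Finset.mem_filter.1 hi).2), Finset.sum_const, hk]
      simp [mul_comm]
    have hone : ∀ i ∈ Finset.univ.filter (fun i => ¬ r i = u), r i = 1 := by
      intro i hi
      rcases hall i with h' | h'
      · exact h'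
      · exact absurd h' (Finset.mem_filter.1 hi).2
    have hsum1 : (∑ i ∈ Finset.univ.filter (fun i => ¬ r i = u), r i)
        = ((n - k : ℕ) : ℝ) := by
      rw [Finset.sum_congr rfl hone, Finset.sum_const,
        (show (Finset.univ.filter (fun i => ¬ r i = u)).card = n - k by omega)]
      simp
    have hprodr : (∏ i, r i) = u^k := by rw [← hprodsplit, hprodU, hprod1, mul_one]
    have hkn : k ≤ n := by omega
    rcases Nat.lt_or_ge k n with hklt | hkge
    · -- k ≤ n-1 : use piece' with ρ = 1
      have hcast : ((n - k : ℕ) : ℝ) = (n:ℝ) - k := by push_cast [Nat.cast_sub hkn]; ring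
      have hsum' : u*k + ((n:ℝ) - k) = u^2 := by
        rw [← hsum, ← hsumsplit, hsumU, hsum1, hcast]
      have hρval : (1:ℝ) = u^2 - k*u - ((n:ℝ)-1-k) := by linarith
      have hres := piece' n k hn2 hn14 (by omega) u 1 hu.le hρval le_rfl hu.le
      rw [hprodr]
      have hsplit : u^(2*n) = u^(2*k) * u^(2*(n-k)) := by
        rw [← pow_add]
        congr 1
        omega
      calc u^(2*n) = u^(2*k) * u^(2*(n-k)) := hsplit
        _ ≤ u^(2*k) * ((n:ℝ)^n * 1^2) := by
            apply mul_le_mul_of_nonneg_left hres (by positivity)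
        _ = (n:ℝ)^n * (u^k)^2 := by rw [← pow_mul]; ring
    · -- k = n
      have hkn' : k = n := by omega
      rw [hprodr, hkn', ← pow_mul, mul_comm n 2]
      nlinarith [pow_pos hu0 (2*n)]
  · -- exactly one interior point i₀
    obtain ⟨i₀, hi₀⟩ := Finset.card_eq_one.1 h
    have hi₀mem : i₀ ∈ Finset.univ.filter (fun i => r i ≠ 1 ∧ r i ≠ u) := by
      rw [hi₀]; exact Finset.mem_singleton_self i₀
    have hall : ∀ i, i ≠ i₀ → r i = 1 ∨ r i = u := by
      intro i hne
      by_contra hcon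
      push_neg at hcon
      have : i ∈ Finset.univ.filter (fun i => r i ≠ 1 ∧ r i ≠ u) := by
        simp [hcon.1, hcon.2]
      rw [hi₀, Finset.mem_singleton] at this
      exact hne this
    set E := Finset.univ.erase i₀ with hE
    have hcardE : E.card = n - 1 := by
      rw [hE, Finset.card_erase_of_mem (Finset.mem_univ i₀), Finset.card_univ, Fintype.card_fin]
    set k := (E.filter (fun i => r i = u)).card with hk
    have hprodsplit := Finset.prod_filter_mul_prod_filter_not E (fun i => r i = u) r
    have hsumsplit := Finset.sum_filter_add_sum_filter_not E (fun i => r i = u) r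
    have hcards := Finset.card_filter_add_card_filter_not
      (s := E) (p := fun i => r i = u)
    rw [hcardE] at hcards
    have hprodU : (∏ i ∈ E.filter (fun i => r i = u), r i) = u^k := by
      rw [Finset.prod_congr rfl (fun i hi => (Finset.mem_filter.1 hi).2), Finset.prod_const, hk]
    have hprod1 : (∏ i ∈ E.filter (fun i => ¬ r i = u), r i) = 1 := by
      apply Finset.prod_eq_one
      intro i hi
      have hiE := Finset.mem_filter.1 hi
      have hne : i ≠ i₀ := Finset.ne_of_mem_erase hiE.1
      rcases hall i hne with h' | h'
      · exact h'
      · exact absurd h' hiE.2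
    have hsumU : (∑ i ∈ E.filter (fun i => r i = u), r i) = u*k := by
      rw [Finset.sum_congr rfl (fun i hi => (Finset.mem_filter.1 hi).2), Finset.sum_const, hk]
      simp [mul_comm]
    have hone : ∀ i ∈ E.filter (fun i => ¬ r i = u), r i = 1 := by
      intro i hi
      have hiE := Finset.mem_filter.1 hi
      have hne : i ≠ i₀ := Finset.ne_of_mem_erase hiE.1
      rcases hall i hne with h' | h'
      · exact h'
      · exact absurd h' hiE.2
    have hsum1 : (∑ i ∈ E.filter (fun i => ¬ r i = u), r i) = ((n - 1 - k : ℕ) : ℝ) := by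
      rw [Finset.sum_congr rfl hone, Finset.sum_const,
        (show (E.filter (fun i => ¬ r i = u)).card = n - 1 - k by omega)]
      simp
    have hprodE : (∏ i ∈ E, r i) = u^k := by rw [← hprodsplit, hprodU, hprod1, mul_one]
    have hsumE : (∑ i ∈ E, r i) = u*k + ((n - 1 - k : ℕ) : ℝ) := by
      rw [← hsumsplit, hsumU, hsum1]
    have hprodr : (∏ i, r i) = r i₀ * u^k := by
      rw [← Finset.mul_prod_erase Finset.univ r (Finset.mem_univ i₀), ← hE, hprodE]
    have hsumr : (∑ i, r i) = r i₀ + (u*k + ((n - 1 - k : ℕ) : ℝ)) := by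
      rw [← Finset.add_sum_erase Finset.univ r (Finset.mem_univ i₀), ← hE, hsumE]
    have hk1 : k ≤ n - 1 := by
      have := Finset.card_filter_le E (fun i => r i = u)
      omega
    have hcast : ((n - 1 - k : ℕ) : ℝ) = (n:ℝ) - 1 - k := by
      have h1' : k + 1 ≤ n := by omega
      push_cast [Nat.cast_sub (by omega : 1 + k ≤ n), Nat.sub_sub]
      ring
    have hρval : r i₀ = u^2 - k*u - ((n:ℝ)-1-k) := by
      rw [hsumr, hcast] at hsum
      linarith
    have hres := piece' n k hn2 hn14 (by omega) u (r i₀) hu.le hρval (h1 i₀) (hu' i₀)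
    rw [hprodr]
    have hsplit : u^(2*n) = u^(2*k) * u^(2*(n-k)) := by
      rw [← pow_add]
      congr 1
      omega
    calc u^(2*n) = u^(2*k) * u^(2*(n-k)) := hsplit
      _ ≤ u^(2*k) * ((n:ℝ)^n * (r i₀)^2) := by
          apply mul_le_mul_of_nonneg_left hres (by positivity)
      _ = (n:ℝ)^n * (r i₀ * u^k)^2 := by rw [mul_pow, ← pow_mul]; ring

lemma smooth_step (n : ℕ) (u : ℝ) (r : Fin n → ℝ)
    (h1 : ∀ i, 1 ≤ r i) (h2 : ∀ i, r i ≤ u) (hsum : ∑ i, r i = u^2)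
    (i j : Fin n) (hij : i ≠ j) (a b : ℝ)
    (hab : a + b = r i + r j) (h1a : 1 ≤ a) (hau : a ≤ u) (h1b : 1 ≤ b) (hbu : b ≤ u)
    (hprodle : a*b ≤ r i * r j) :
    ∃ r' : Fin n → ℝ, (∀ l, 1 ≤ r' l) ∧ (∀ l, r' l ≤ u) ∧ (∑ l, r' l = u^2) ∧
      (∏ l, r' l ≤ ∏ l, r l) ∧ r' i = a ∧ r' j = b ∧ (∀ l, l ≠ i → l ≠ j → r' l = r l) := by
  set r' : Fin n → ℝ := Function.update (Function.update r i a) j b with hr'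
  have hri : r' i = a := by
    rw [hr', Function.update_of_ne hij, Function.update_self]
  have hrj : r' j = b := by rw [hr', Function.update_self]
  have hoth : ∀ l, l ≠ i → l ≠ j → r' l = r l := by
    intro l hli hlj
    rw [hr', Function.update_of_ne hlj, Function.update_of_ne hli]
  have hmemj : j ∈ (Finset.univ.erase i) := Finset.mem_erase.2 ⟨hij.symm, Finset.mem_univ j⟩
  have hdecS : ∀ f : Fin n → ℝ,
      ∑ l, f l = f i + (f j + ∑ l ∈ (Finset.univ.erase i).erase j, f l) := by
    intro f
    rw [← Finset.add_sum_erase _ f (Finset.mem_univ i), ← Finset.add_sum_erase _ f hmemj]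
  have hdecP : ∀ f : Fin n → ℝ,
      ∏ l, f l = f i * (f j * ∏ l ∈ (Finset.univ.erase i).erase j, f l) := by
    intro f
    rw [← Finset.mul_prod_erase _ f (Finset.mem_univ i), ← Finset.mul_prod_erase _ f hmemj]
  have hrest : ∀ l ∈ (Finset.univ.erase i).erase j, r' l = r l := by
    intro l hl
    exact hoth l (Finset.ne_of_mem_erase (Finset.mem_of_mem_erase hl)) (Finset.ne_of_mem_erase hl)
  have hErw : (∑ l ∈ (Finset.univ.erase i).erase j, r' l)
      = ∑ l ∈ (Finset.univ.erase i).erase j, r l := Finset.sum_congr rfl hrest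
  have hEpw : (∏ l ∈ (Finset.univ.erase i).erase j, r' l)
      = ∏ l ∈ (Finset.univ.erase i).erase j, r l := Finset.prod_congr rfl hrest
  have hP0 : 0 ≤ ∏ l ∈ (Finset.univ.erase i).erase j, r l :=
    Finset.prod_nonneg (fun l _ => le_trans zero_le_one (h1 l))
  refine ⟨r', ?_, ?_, ?_, ?_, hri, hrj, hoth⟩
  · intro l
    rcases eq_or_ne l j with rfl | hlj
    · rw [hrj]; exact h1b
    rcases eq_or_ne l i with rfl | hli
    · rw [hri]; exact h1a
    rw [hoth l hli hlj]; exact h1 l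
  · intro l
    rcases eq_or_ne l j with rfl | hlj
    · rw [hrj]; exact hbu
    rcases eq_or_ne l i with rfl | hli
    · rw [hri]; exact hau
    rw [hoth l hli hlj]; exact h2 l
  · rw [hdecS r', hri, hrj, hErw]
    rw [hdecS r] at hsum
    linarith
  · rw [hdecP r', hdecP r, hri, hrj, hEpw]
    have := mul_le_mul_of_nonneg_right hprodle hP0
    nlinarith [this]

open scoped Classical in
lemma core_aux (n : ℕ) (hn2 : 2 ≤ n) (hn14 : n ≤ 14) (u : ℝ) (hu : 1 < u) :
    ∀ d : ℕ, ∀ r : Fin n → ℝ, (∀ i, 1 ≤ r i) → (∀ i, r i ≤ u) → (∑ i, r i = u^2) →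
    (Finset.univ.filter (fun i => r i ≠ 1 ∧ r i ≠ u)).card ≤ d →
    u^(2*n) ≤ (n:ℝ)^n * (∏ i, r i)^2 := by
  intro d
  induction d with
  | zero =>
    intro r h1 h2 h3 hc
    exact vertex n hn2 hn14 u hu r h1 h2 h3 (le_trans hc (by norm_num))
  | succ d ih =>
    intro r h1 h2 h3 hc
    by_cases hle : (Finset.univ.filter (fun i => r i ≠ 1 ∧ r i ≠ u)).card ≤ 1
    · exact vertex n hn2 hn14 u hu r h1 h2 h3 hle
    · push_neg at hle
      obtain ⟨i, hi, j, hj, hij⟩ := Finset.one_lt_card.1 hle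
      have hiP := (Finset.mem_filter.1 hi).2
      have hjP := (Finset.mem_filter.1 hj).2
      have key : ∀ r' : Fin n → ℝ, (∀ l, 1 ≤ r' l) → (∀ l, r' l ≤ u) → (∑ l, r' l = u^2) →
          (∏ l, r' l ≤ ∏ l, r l) →
          (Finset.univ.filter (fun l => r' l ≠ 1 ∧ r' l ≠ u)).card ≤ d →
          u^(2*n) ≤ (n:ℝ)^n * (∏ l, r l)^2 := by
        intro r' k1 k2 k3 kprod kcard
        have hres := ih r' k1 k2 k3 kcard
        have hp0 : 0 ≤ ∏ l, r' l := Finset.prod_nonneg (fun l _ => le_trans zero_le_one (k1 l))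
        have hsq : (∏ l, r' l)^2 ≤ (∏ l, r l)^2 := pow_le_pow_left₀ hp0 kprod 2
        calc u^(2*n) ≤ (n:ℝ)^n * (∏ l, r' l)^2 := hres
          _ ≤ (n:ℝ)^n * (∏ l, r l)^2 := by
              apply mul_le_mul_of_nonneg_left hsq (by positivity)
      rcases le_or_gt (r i + r j) (1+u) with hC | hC
      · obtain ⟨r', k1, k2, k3, kprod, ki, kj, koth⟩ :=
          smooth_step n u r h1 h2 h3 i j hij 1 (r i + r j - 1)
            (by ring) le_rfl hu.le (by linarith [h1 i, h1 j]) (by linarith)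
            (by nlinarith [h1 i, h1 j])
        apply key r' k1 k2 k3 kprod
        have hsub : Finset.univ.filter (fun l => r' l ≠ 1 ∧ r' l ≠ u) ⊆
            (Finset.univ.filter (fun l => r l ≠ 1 ∧ r l ≠ u)).erase i := by
          intro l hl
          have hlP := (Finset.mem_filter.1 hl).2
          have hlne : l ≠ i := by
            intro h'
            rw [h', ki] at hlP
            exact hlP.1 rfl
          refine Finset.mem_erase.2 ⟨hlne, Finset.mem_filter.2 ⟨Finset.mem_univ l, ?_⟩⟩
          rcases eq_or_ne l j with rfl | hlj
          · exact hjP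
          · rw [koth l hlne hlj] at hlP
            exact hlP
        calc (Finset.univ.filter (fun l => r' l ≠ 1 ∧ r' l ≠ u)).card
            ≤ ((Finset.univ.filter (fun l => r l ≠ 1 ∧ r l ≠ u)).erase i).card :=
              Finset.card_le_card hsub
          _ = (Finset.univ.filter (fun l => r l ≠ 1 ∧ r l ≠ u)).card - 1 :=
              Finset.card_erase_of_mem hi
          _ ≤ d := by omega
      · obtain ⟨r', k1, k2, k3, kprod, ki, kj, koth⟩ :=
          smooth_step n u r h1 h2 h3 i j hij (r i + r j - u) u
            (by ring) (by linarith) (by linarith [h2 i, h2 j]) hu.le le_rfl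
            (by nlinarith [h2 i, h2 j])
        apply key r' k1 k2 k3 kprod
        have hsub : Finset.univ.filter (fun l => r' l ≠ 1 ∧ r' l ≠ u) ⊆
            (Finset.univ.filter (fun l => r l ≠ 1 ∧ r l ≠ u)).erase j := by
          intro l hl
          have hlP := (Finset.mem_filter.1 hl).2
          have hlne : l ≠ j := by
            intro h'
            rw [h', kj] at hlP
            exact hlP.2 rfl
          refine Finset.mem_erase.2 ⟨hlne, Finset.mem_filter.2 ⟨Finset.mem_univ l, ?_⟩⟩
          rcases eq_or_ne l i with rfl | hli
          · exact hiP
          · rw [koth l hli hlne] at hlP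
            exact hlP
        calc (Finset.univ.filter (fun l => r' l ≠ 1 ∧ r' l ≠ u)).card
            ≤ ((Finset.univ.filter (fun l => r l ≠ 1 ∧ r l ≠ u)).erase j).card :=
              Finset.card_le_card hsub
          _ = (Finset.univ.filter (fun l => r l ≠ 1 ∧ r l ≠ u)).card - 1 :=
              Finset.card_erase_of_mem hj
          _ ≤ d := by omega

lemma core (n : ℕ) (hn2 : 2 ≤ n) (hn14 : n ≤ 14) (u : ℝ) (hu : 1 < u)
    (r : Fin n → ℝ) (h1 : ∀ i, 1 ≤ r i) (h2 : ∀ i, r i ≤ u) (h3 : ∑ i, r i = u^2) :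
    u^(2*n) ≤ (n:ℝ)^n * (∏ i, r i)^2 := by
  classical
  exact core_aux n hn2 hn14 u hu
    (Finset.univ.filter (fun i => r i ≠ 1 ∧ r i ≠ u)).card r h1 h2 h3 le_rfl

end PolarizationAux

/-- For every integer `n` with `2 ≤ n ≤ 14` and every collection of unit vectors
`v 0, …, v (n-1)` in `ℝⁿ`, one has
`sup_{‖x‖ = 1} |⟨x, v₁⟩ ⋯ ⟨x, vₙ⟩| ≥ n ^ (-n/2)`. -/
theorem stmt_0 (n : ℕ) (hn : 2 ≤ n) (hn' : n ≤ 14)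
    (v : Fin n → EuclideanSpace ℝ (Fin n)) (hv : ∀ i, ‖v i‖ = 1) :
    (n : ℝ) ^ (-(n : ℝ) / 2) ≤
      sSup {y : ℝ | ∃ x : EuclideanSpace ℝ (Fin n), ‖x‖ = 1 ∧ y = |∏ i, ⟪x, v i⟫|} := by
  classical
  -- choose the optimal signing
  obtain ⟨σ, hσ⟩ := Finite.exists_max
    (fun σ : Fin n → Bool => ‖∑ i, (if σ i then (1:ℝ) else -1) • v i‖)
  set ε : Fin n → ℝ := fun i => if σ i then (1:ℝ) else -1 with hε
  have hε2 : ∀ i, ε i * ε i = 1 := by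
    intro i; simp only [hε]; cases h : σ i <;> simp [h]
  have hεabs : ∀ i, |ε i| = 1 := by
    intro i; simp only [hε]; cases h : σ i <;> simp [h]
  set s : EuclideanSpace ℝ (Fin n) := ∑ i, ε i • v i with hs
  set R : ℝ := ‖s‖^2 with hR
  set r : Fin n → ℝ := fun i => ε i * ⟪v i, s⟫ with hr
  -- flip optimality : 1 ≤ r i
  have hr1 : ∀ i, 1 ≤ r i := by
    intro i
    set σ' : Fin n → Bool := Function.update σ i (!σ i) with hσ'
    set ε' : Fin n → ℝ := fun l => if σ' l then (1:ℝ) else -1 with hε'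
    have hε'i : ε' i = - ε i := by
      rw [hε', hε, hσ']
      simp only [Function.update_self]
      cases σ i <;> norm_num
    have hε'l : ∀ l, l ≠ i → ε' l = ε l := by
      intro l hl
      simp only [hε', hε, hσ', Function.update_of_ne hl]
    have hs' : (∑ l, ε' l • v l) = s - (2 * ε i) • v i := by
      rw [hs]
      rw [← Finset.add_sum_erase _ (fun l => ε' l • v l) (Finset.mem_univ i),
          ← Finset.add_sum_erase _ (fun l => ε l • v l) (Finset.mem_univ i)]
      rw [Finset.sum_congr rfl (fun l hl => by
        rw [hε'l l (Finset.ne_of_mem_erase hl)])]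
      rw [hε'i]
      rw [add_sub_right_comm]
      congr 1
      rw [← sub_smul]
      congr 1
      ring
    have hle : ‖∑ l, ε' l • v l‖ ≤ ‖s‖ := hσ σ'
    rw [hs'] at hle
    have hexp : ‖s - (2 * ε i) • v i‖^2
        = ‖s‖^2 - 2 * ⟪s, (2 * ε i) • v i⟫ + ‖(2 * ε i) • v i‖^2 := by
      rw [norm_sub_sq_real]
    have hw : ‖(2 * ε i) • v i‖^2 = 4 := by
      rw [norm_smul, hv i, Real.norm_eq_abs, abs_mul, hεabs i]
      norm_num
    have hinner : ⟪s, (2 * ε i) • v i⟫ = 2 * (ε i * ⟪v i, s⟫) := by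
      rw [real_inner_smul_right, real_inner_comm]
      ring
    have hsq : ‖s - (2 * ε i) • v i‖^2 ≤ ‖s‖^2 := by
      apply pow_le_pow_left₀ (norm_nonneg _) hle
    rw [hexp, hw, hinner] at hsq
    rw [hr]
    simp only
    linarith
  -- sum of r equals R
  have hsumr : ∑ i, r i = R := by
    rw [hR, hr, ← real_inner_self_eq_norm_sq]
    rw [hs]
    rw [sum_inner]
    apply Finset.sum_congr rfl
    intro i _
    rw [real_inner_smul_left]
  -- r i ^ 2 ≤ R
  have hrsq : ∀ i, r i ^ 2 ≤ R := by
    intro i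
    have := real_inner_mul_inner_self_le (v i) s
    rw [real_inner_self_eq_norm_sq, real_inner_self_eq_norm_sq, hv i] at this
    calc r i ^ 2 = (ε i * ε i) * (⟪v i, s⟫ * ⟪v i, s⟫) := by rw [hr]; ring
      _ = ⟪v i, s⟫ * ⟪v i, s⟫ := by rw [hε2 i]; ring
      _ ≤ 1^2 * ‖s‖^2 := this
      _ = R := by rw [hR]; ring
  -- R ≥ n ≥ 2
  have hRn : (n:ℝ) ≤ R := by
    rw [← hsumr]
    calc (n:ℝ) = ∑ _i : Fin n, (1:ℝ) := by simp
      _ ≤ ∑ i, r i := Finset.sum_le_sum (fun i _ => hr1 i)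
  have hR2 : (2:ℝ) ≤ R := le_trans (by exact_mod_cast hn) hRn
  set u : ℝ := Real.sqrt R with hu
  have hR0 : (0:ℝ) ≤ R := by linarith
  have hu1 : 1 < u := by
    rw [hu]
    rw [show (1:ℝ) = Real.sqrt 1 by simp]
    exact Real.sqrt_lt_sqrt (by norm_num) (by linarith)
  have hu0 : (0:ℝ) < u := lt_trans one_pos hu1
  have hRu : R = u^2 := (Real.sq_sqrt hR0).symm
  have hru : ∀ i, r i ≤ u := by
    intro i
    calc r i ≤ |r i| := le_abs_self _
      _ = Real.sqrt (r i ^ 2) := (Real.sqrt_sq_eq_abs _).symm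
      _ ≤ Real.sqrt R := Real.sqrt_le_sqrt (hrsq i)
  have hsumu : ∑ i, r i = u^2 := by rw [hsumr, hRu]
  -- the core inequality
  have hcore := core n hn hn' u hu1 r hr1 hru hsumu
  -- the witness
  set x : EuclideanSpace ℝ (Fin n) := u⁻¹ • s with hx
  have hnx : ‖x‖ = 1 := by
    rw [hx, norm_smul]
    have hns : ‖s‖ = u := by
      rw [hu, hR, Real.sqrt_sq (norm_nonneg s)]
    rw [hns, Real.norm_eq_abs, abs_inv, abs_of_pos hu0]
    field_simp
  have hinner : ∀ i, ⟪x, v i⟫ = u⁻¹ * (ε i * r i) := by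
    intro i
    rw [hx, real_inner_smul_left, real_inner_comm]
    congr 1
    rw [hr]
    simp only
    rw [← mul_assoc, mul_comm (ε i) (ε i), hε2 i, one_mul]
  have habs : |∏ i, ⟪x, v i⟫| = (u⁻¹)^n * ∏ i, r i := by
    rw [Finset.abs_prod]
    have : ∀ i ∈ Finset.univ, |⟪x, v i⟫| = u⁻¹ * r i := by
      intro i _
      rw [hinner i, abs_mul, abs_mul, hεabs i, abs_inv, abs_of_pos hu0,
        abs_of_nonneg (le_trans zero_le_one (hr1 i))]
      ring
    rw [Finset.prod_congr rfl this, Finset.prod_mul_distrib, Finset.prod_const,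
      Finset.card_univ, Fintype.card_fin]
  -- the witness value beats n^(-n/2)
  have hprodpos : 0 < ∏ i, r i :=
    Finset.prod_pos (fun i _ => lt_of_lt_of_le one_pos (hr1 i))
  set y₀ : ℝ := (u⁻¹)^n * ∏ i, r i with hy₀
  have hy₀pos : 0 < y₀ := by positivity
  have hy₀sq : ((n:ℝ)^n)⁻¹ ≤ y₀^2 := by
    have hun : (0:ℝ) < u^(2*n) := by positivity
    have hnn : (0:ℝ) < (n:ℝ)^n := by positivity
    have hupow : u^(2*n) = (u^n)^2 := by rw [← pow_mul, Nat.mul_comm]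
    have h1 : y₀^2 * u^(2*n) = (∏ i, r i)^2 := by
      rw [hy₀, hupow, inv_pow]
      have hunz : (u:ℝ)^n ≠ 0 := by positivity
      field_simp
    have h2 : 1 * u^(2*n) ≤ (y₀^2 * (n:ℝ)^n) * u^(2*n) := by
      rw [one_mul]
      calc u^(2*n) ≤ (n:ℝ)^n * (∏ i, r i)^2 := hcore
        _ = (y₀^2 * (n:ℝ)^n) * u^(2*n) := by rw [← h1]; ring
    have h3 : 1 ≤ y₀^2 * (n:ℝ)^n := le_of_mul_le_mul_right h2 hun
    rw [inv_eq_one_div, div_le_iff₀ hnn]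
    linarith
  have htarget : (n:ℝ) ^ (-(n:ℝ)/2) ≤ y₀ := by
    have hn0 : (0:ℝ) < n := by positivity
    have hT : ((n:ℝ) ^ (-(n:ℝ)/2))^2 = ((n:ℝ)^n)⁻¹ := by
      rw [← Real.rpow_natCast ((n:ℝ) ^ (-(n:ℝ)/2)) 2, ← Real.rpow_mul hn0.le]
      rw [show (-(n:ℝ)/2) * (2:ℕ) = -(n:ℝ) by push_cast; ring]
      rw [Real.rpow_neg hn0.le, Real.rpow_natCast]
    calc (n:ℝ) ^ (-(n:ℝ)/2) = Real.sqrt (((n:ℝ) ^ (-(n:ℝ)/2))^2) :=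
          (Real.sqrt_sq (Real.rpow_nonneg hn0.le _)).symm
      _ ≤ Real.sqrt (y₀^2) := by
          apply Real.sqrt_le_sqrt
          rw [hT]
          exact hy₀sq
      _ = y₀ := Real.sqrt_sq hy₀pos.le
  -- conclude via sSup
  apply le_trans htarget
  apply le_csSup
  · refine ⟨1, ?_⟩
    rintro y ⟨x', hx', rfl⟩
    rw [Finset.abs_prod]
    apply Finset.prod_le_one
    · intro i _; exact abs_nonneg _
    · intro i _
      calc |⟪x', v i⟫| ≤ ‖x'‖ * ‖v i‖ := abs_real_inner_le_norm _ _
        _ = 1 := by rw [hx', hv i]; ring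
  · exact ⟨x, hnx, habs.symm ▸ rfl⟩
end

section
/- Let n ≥ 1 and let v₁, …, vₙ be unit vectors in ℝⁿ such that v = ∑_{i=1}^{n} vᵢ satisfies ‖v‖ ≥ ‖∑_{i=1}^{n} εᵢ vᵢ‖ for every choice of signs ε₁, …, εₙ ∈ {-1, 1}. Then ⟨vᵢ, v⟩ ≥ 1 for every 1 ≤ i ≤ n, and √n ≤ ‖v‖ ≤ n. -/
open scoped RealInnerProductSpace

/-- If `v = ∑ vᵢ` is a longest signed sum of the unit vectors `v₁, …, vₙ` in `ℝⁿ`,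
then `⟨vᵢ, v⟩ ≥ 1` for all `i`, and `√n ≤ ‖v‖ ≤ n`. -/
theorem stmt_5 (n : ℕ) (hn : 1 ≤ n)
    (v : Fin n → EuclideanSpace ℝ (Fin n)) (hv : ∀ i, ‖v i‖ = 1)
    (h : ∀ ε : Fin n → ℝ, (∀ i, ε i = 1 ∨ ε i = -1) → ‖∑ i, ε i • v i‖ ≤ ‖∑ i, v i‖) :
    (∀ i, 1 ≤ ⟪v i, ∑ j, v j⟫) ∧
      Real.sqrt n ≤ ‖∑ i, v i‖ ∧ ‖∑ i, v i‖ ≤ (n : ℝ) := by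
  set S := ∑ j, v j with hS
  have key : ∀ i, 1 ≤ ⟪v i, S⟫ := by
    intro i
    have h1 := h (fun j => if j = i then (-1 : ℝ) else 1) (by
      intro j; by_cases hj : j = i <;> simp [hj])
    have hsum : ∑ j, (if j = i then (-1 : ℝ) else 1) • v j = S - (2 : ℝ) • v i := by
      have : ∀ j, (if j = i then (-1 : ℝ) else 1) • v j
          = v j - (if j = i then (2 : ℝ) • v i else 0) := by
        intro j; by_cases hj : j = i <;> simp [hj] <;> module
      rw [Finset.sum_congr rfl (fun j _ => this j), Finset.sum_sub_distrib,
        Finset.sum_ite_eq' Finset.univ i (fun _ => (2 : ℝ) • v i)]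
      simp [hS]
    rw [hsum] at h1
    have hsq : ‖S - (2 : ℝ) • v i‖ ^ 2 ≤ ‖S‖ ^ 2 := by
      have := norm_nonneg (S - (2 : ℝ) • v i)
      nlinarith
    have hexp : ‖S - (2 : ℝ) • v i‖ ^ 2
        = ‖S‖ ^ 2 - 2 * ⟪S, (2 : ℝ) • v i⟫ + ‖(2 : ℝ) • v i‖ ^ 2 := by
      rw [← real_inner_self_eq_norm_sq, ← real_inner_self_eq_norm_sq,
        ← real_inner_self_eq_norm_sq, inner_sub_sub_self, real_inner_comm ((2:ℝ) • v i) S]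
      ring
    have hinner : ⟪S, (2 : ℝ) • v i⟫ = 2 * ⟪S, v i⟫ := real_inner_smul_right _ _ _
    have hnormv : ‖(2 : ℝ) • v i‖ = 2 := by
      rw [norm_smul]; simp [hv i]
    have hsym : ⟪v i, S⟫ = ⟪S, v i⟫ := real_inner_comm _ _
    rw [hexp, hinner, hnormv] at hsq
    nlinarith
  refine ⟨key, ?_, ?_⟩
  · have hS2 : ‖S‖ ^ 2 = ∑ i, ⟪v i, S⟫ := by
      rw [← real_inner_self_eq_norm_sq, hS, sum_inner]
    have hge : (n : ℝ) ≤ ‖S‖ ^ 2 := by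
      rw [hS2]
      calc (n : ℝ) = ∑ _i : Fin n, (1 : ℝ) := by simp
        _ ≤ ∑ i, ⟪v i, S⟫ := Finset.sum_le_sum fun i _ => key i
    calc Real.sqrt n ≤ Real.sqrt (‖S‖ ^ 2) := Real.sqrt_le_sqrt hge
      _ = ‖S‖ := by rw [Real.sqrt_sq (norm_nonneg _)]
  · calc ‖S‖ ≤ ∑ i, ‖v i‖ := norm_sum_le _ _
      _ = (n : ℝ) := by simp [hv]
end

section
/- Let n ≥ 2 be an integer, let s ∈ [√n, n], and set k₀(s) = min{k ∈ ℕ, k ≥ 1 : n - k < s - k/s}. Then the minimum of f(a) = a₁a₂⋯aₙ over Σ_s = {a ∈ [1/s, 1]ⁿ : ∑_{i=1}^{n} aᵢ = s} equals μ(s) = s^{1-k₀(s)} · (s - (k₀(s)-1)/s - n + k₀(s)). -/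
open Finset

private lemma pin_k0 (n k0 : ℕ) (s : ℝ) (hs1 : 1 < s)
    (hk0 : IsLeast {k : ℕ | 1 ≤ k ∧ (n : ℝ) - k < s - k / s} k0)
    (j : ℕ) (h1 : s - (j:ℝ)/s ≤ (n:ℝ) - j) (h2 : (n:ℝ) - ((j:ℝ)+1) < s - ((j:ℝ)+1)/s) :
    k0 = j + 1 := by
  have hs0 : (0:ℝ) < s := by linarith
  have hle : k0 ≤ j + 1 := by
    refine hk0.2 ⟨Nat.le_add_left 1 j, ?_⟩
    push_cast; convert h2 using 2
  have hgt : j < k0 := by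
    by_contra h
    push_neg at h
    have hj : (k0:ℝ) ≤ j := by exact_mod_cast h
    have hc := hk0.1.2
    have ha : ((n:ℝ) - k0) * s < s*s - k0 := by
      have := mul_lt_mul_of_pos_right hc hs0
      have hk : (k0:ℝ)/s * s = k0 := div_mul_cancel₀ _ (ne_of_gt hs0)
      nlinarith
    have hb : s*s - j ≤ ((n:ℝ) - j) * s := by
      have := mul_le_mul_of_nonneg_right h1 (le_of_lt hs0)
      have hk : (j:ℝ)/s * s = j := div_mul_cancel₀ _ (ne_of_gt hs0)
      nlinarith
    nlinarith [mul_nonneg (sub_nonneg.2 hj) (by linarith : (0:ℝ) ≤ s - 1)]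
  omega

private lemma final_form (n k0 jj : ℕ) (s t : ℝ) (hs0 : 0 < s) (hk : k0 = jj + 1)
    (ht : t = s - (jj:ℝ)/s - n + jj + 1) :
    (1/s)^jj * t = s ^ ((1:ℤ) - (k0:ℤ)) * (s - ((k0:ℝ) - 1)/s - (n:ℝ) + (k0:ℝ)) := by
  subst hk
  have h1 : (1:ℤ) - ((jj + 1 : ℕ) : ℤ) = -(jj:ℤ) := by push_cast; ring
  rw [h1, zpow_neg, zpow_natCast, one_div, inv_pow, ht]
  have hs : s ≠ 0 := ne_of_gt hs0
  push_cast
  field_simp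
  ring

private lemma base_case (n k0 : ℕ) (s : ℝ) (hs1 : 1 < s)
    (hk0 : IsLeast {k : ℕ | 1 ≤ k ∧ (n : ℝ) - k < s - k / s} k0)
    (a : Fin n → ℝ) (ha : ∀ i, a i ∈ Set.Icc (1/s) 1) (hsum : ∑ i, a i = s)
    (hcard : (univ.filter (fun i => a i ≠ 1/s ∧ a i ≠ 1)).card ≤ 1) :
    ∏ i, a i = s ^ ((1:ℤ) - (k0:ℤ)) * (s - ((k0:ℝ) - 1)/s - (n:ℝ) + (k0:ℝ)) := by
  have hs0 : (0:ℝ) < s := by linarith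
  have hinv : (1:ℝ)/s < 1 := by rw [div_lt_one hs0]; exact hs1
  interval_cases h : (univ.filter (fun i => a i ≠ 1/s ∧ a i ≠ 1)).card
  · -- card = 0 : all coordinates are 1/s or 1
    have hall : ∀ i, a i = 1/s ∨ a i = 1 := by
      intro i
      by_contra hcon
      push_neg at hcon
      have : i ∈ univ.filter (fun i => a i ≠ 1/s ∧ a i ≠ 1) := by
        simp only [Finset.mem_filter, Finset.mem_univ, true_and]; exact hcon
      rw [Finset.card_eq_zero.mp h] at this
      exact absurd this (Finset.notMem_empty i)
    obtain ⟨j, c, hjc, hprodX, hsumX⟩ :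
        ∃ j c : ℕ, j + c = n ∧ ∏ i, a i = (1/s)^j ∧ ∑ i, a i = (j:ℝ)*(1/s) + c := by
      refine ⟨(univ.filter (fun i => a i = 1/s)).card,
        (univ.filter (fun i => ¬ a i = 1/s)).card, ?_, ?_, ?_⟩
      · rw [Finset.card_filter_add_card_filter_not]; simp
      · have h2 : ∏ i ∈ univ.filter (fun i => a i = 1/s), a i
            = (1/s) ^ (univ.filter (fun i => a i = 1/s)).card := by
          rw [Finset.prod_congr rfl (fun i hi => (Finset.mem_filter.mp hi).2),
            Finset.prod_const]
        have h3 : ∏ i ∈ univ.filter (fun i => ¬ a i = 1/s), a i = 1 :=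
          Finset.prod_eq_one (fun i hi => by
            rcases hall i with h' | h'
            · exact absurd h' (Finset.mem_filter.mp hi).2
            · exact h')
        rw [← Finset.prod_filter_mul_prod_filter_not univ (fun i => a i = 1/s), h2, h3, mul_one]
      · have h2 : ∑ i ∈ univ.filter (fun i => a i = 1/s), a i
            = ((univ.filter (fun i => a i = 1/s)).card : ℝ) * (1/s) := by
          rw [Finset.sum_congr rfl (fun i hi => (Finset.mem_filter.mp hi).2),
            Finset.sum_const, nsmul_eq_mul]
        have h3 : ∑ i ∈ univ.filter (fun i => ¬ a i = 1/s), a i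
            = ((univ.filter (fun i => ¬ a i = 1/s)).card : ℝ) := by
          rw [Finset.sum_congr rfl (fun i hi => show a i = 1 by
            rcases hall i with h' | h'
            · exact absurd h' (Finset.mem_filter.mp hi).2
            · exact h'), Finset.sum_const, nsmul_eq_mul, mul_one]
        rw [← Finset.sum_filter_add_sum_filter_not univ (fun i => a i = 1/s), h2, h3]
    have hsumsplit : (j:ℝ)*(1/s) + c = s := hsumX.symm.trans hsum
    have hcast : (c:ℝ) = (n:ℝ) - j := by
      have : (j:ℝ) + c = n := by exact_mod_cast congrArg (Nat.cast : ℕ → ℝ) hjc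
      linarith
    have hjs : (j:ℝ)*(1/s) = (j:ℝ)/s := by rw [mul_one_div]
    have heq : (n:ℝ) - j = s - (j:ℝ)/s := by
      rw [hcast, hjs] at hsumsplit; linarith
    have hk : k0 = j + 1 := by
      apply pin_k0 n k0 s hs1 hk0 j (le_of_eq heq.symm)
      rw [add_div]
      linarith
    rw [hprodX]
    have := final_form n k0 j s 1 hs0 hk (by linarith)
    simpa using this
  · -- card = 1 : one interior coordinate
    obtain ⟨i0, hi0⟩ := Finset.card_eq_one.mp h
    have hi0mem : i0 ∈ univ.filter (fun i => a i ≠ 1/s ∧ a i ≠ 1) := by rw [hi0]; simp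
    have hi0prop := (Finset.mem_filter.mp hi0mem).2
    have h1n : 1 ≤ n := i0.pos
    have hall : ∀ i, i ≠ i0 → a i = 1/s ∨ a i = 1 := by
      intro i hii
      by_contra hcon
      push_neg at hcon
      have : i ∈ univ.filter (fun i => a i ≠ 1/s ∧ a i ≠ 1) := by
        simp only [Finset.mem_filter, Finset.mem_univ, true_and]; exact hcon
      rw [hi0] at this
      exact hii (Finset.mem_singleton.mp this)
    have ht1 : 1/s < a i0 := lt_of_le_of_ne (ha i0).1 (Ne.symm hi0prop.1)
    have ht2 : a i0 < 1 := lt_of_le_of_ne (ha i0).2 hi0prop.2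
    obtain ⟨j, c, hjc, hprodX, hsumX⟩ :
        ∃ j c : ℕ, j + c = n - 1 ∧ ∏ i, a i = (1/s)^j * a i0 ∧
          ∑ i, a i = a i0 + ((j:ℝ)*(1/s) + c) := by
      have hcardE : (univ.erase i0).card = n - 1 := by
        rw [Finset.card_erase_of_mem (Finset.mem_univ i0)]; simp
      have hone : ∀ i ∈ (univ.erase i0).filter (fun i => ¬ a i = 1/s), a i = 1 := by
        intro i hi
        have hiE := Finset.mem_filter.mp hi
        rcases hall i (Finset.ne_of_mem_erase hiE.1) with h' | h'
        · exact absurd h' hiE.2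
        · exact h'
      refine ⟨((univ.erase i0).filter (fun i => a i = 1/s)).card,
        ((univ.erase i0).filter (fun i => ¬ a i = 1/s)).card, ?_, ?_, ?_⟩
      · rw [Finset.card_filter_add_card_filter_not, hcardE]
      · have h2 : ∏ i ∈ (univ.erase i0).filter (fun i => a i = 1/s), a i
            = (1/s) ^ ((univ.erase i0).filter (fun i => a i = 1/s)).card := by
          rw [Finset.prod_congr rfl (fun i hi => (Finset.mem_filter.mp hi).2),
            Finset.prod_const]
        have h3 : ∏ i ∈ (univ.erase i0).filter (fun i => ¬ a i = 1/s), a i = 1 :=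
          Finset.prod_eq_one hone
        rw [← Finset.mul_prod_erase univ a (Finset.mem_univ i0),
          ← Finset.prod_filter_mul_prod_filter_not (univ.erase i0) (fun i => a i = 1/s),
          h2, h3, mul_one, mul_comm]
      · have h2 : ∑ i ∈ (univ.erase i0).filter (fun i => a i = 1/s), a i
            = (((univ.erase i0).filter (fun i => a i = 1/s)).card : ℝ) * (1/s) := by
          rw [Finset.sum_congr rfl (fun i hi => (Finset.mem_filter.mp hi).2),
            Finset.sum_const, nsmul_eq_mul]
        have h3 : ∑ i ∈ (univ.erase i0).filter (fun i => ¬ a i = 1/s), a i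
            = (((univ.erase i0).filter (fun i => ¬ a i = 1/s)).card : ℝ) := by
          rw [Finset.sum_congr rfl hone, Finset.sum_const, nsmul_eq_mul, mul_one]
        rw [← Finset.add_sum_erase univ a (Finset.mem_univ i0),
          ← Finset.sum_filter_add_sum_filter_not (univ.erase i0) (fun i => a i = 1/s),
          h2, h3]
    have hsumsplit : a i0 + ((j:ℝ)*(1/s) + c) = s := hsumX.symm.trans hsum
    have hcast : (c:ℝ) = (n:ℝ) - 1 - j := by
      have h' : ((j + c : ℕ) : ℝ) = ((n - 1 : ℕ) : ℝ) := congrArg (fun m : ℕ => (m:ℝ)) hjc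
      rw [Nat.cast_sub h1n] at h'
      push_cast at h'
      linarith
    have hjs : (j:ℝ)*(1/s) = (j:ℝ)/s := by rw [mul_one_div]
    have htval : a i0 = s - (j:ℝ)/s - (n:ℝ) + j + 1 := by
      rw [hcast, hjs] at hsumsplit; linarith
    have hk : k0 = j + 1 := by
      apply pin_k0 n k0 s hs1 hk0 j
      · linarith [htval ▸ ht2]
      · rw [add_div]; linarith [htval ▸ ht1]
    rw [hprodX]
    exact final_form n k0 j s (a i0) hs0 hk htval

private lemma smooth_pair (s c x : ℝ) (hs1 : 1 < s) (hx1 : 1/s ≤ x) (hx2 : x ≤ 1)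
    (hy1 : 1/s ≤ c - x) (hy2 : c - x ≤ 1) :
    ∃ e : ℝ, (1/s ≤ e ∧ e ≤ 1) ∧ (1/s ≤ c - e ∧ c - e ≤ 1) ∧
      e * (c - e) ≤ x * (c - x) ∧ (e = 1/s ∨ e = 1 ∨ c - e = 1/s ∨ c - e = 1) := by
  have hs0 : (0:ℝ) < s := by linarith
  have hinv : (1:ℝ)/s < 1 := by rw [div_lt_one hs0]; exact hs1
  have hc1 : 1/s + 1/s ≤ c := by have := add_le_add hx1 hy1; linarith
  have hc2 : c ≤ 2 := by linarith
  rcases le_total x (c - x) with hle | hle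
  · refine ⟨max (1/s) (c - 1), ⟨le_max_left _ _, max_le (le_of_lt hinv) (by linarith)⟩,
      ⟨?_, ?_⟩, ?_, ?_⟩
    · have : max (1/s) (c-1) ≤ c - 1/s := max_le (by linarith) (by linarith)
      linarith
    · have : c - 1 ≤ max (1/s) (c-1) := le_max_right _ _
      linarith
    · have he1 : max (1/s) (c-1) ≤ x := max_le hx1 (by linarith)
      have he2 : max (1/s) (c-1) ≤ c - x := le_trans he1 hle
      nlinarith [mul_nonneg (sub_nonneg.2 he1) (sub_nonneg.2 he2)]
    · rcases max_choice (1/s) (c-1) with h | h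
      · exact Or.inl h
      · right; right; right; rw [h]; ring
  · refine ⟨min 1 (c - 1/s), ⟨le_min (le_of_lt hinv) (by linarith),
      min_le_left _ _⟩, ⟨?_, ?_⟩, ?_, ?_⟩
    · have : min 1 (c - 1/s) ≤ c - 1/s := min_le_right _ _
      linarith
    · have : c - 1 ≤ min 1 (c - 1/s) := le_min (by linarith) (by linarith)
      linarith
    · have he1 : x ≤ min 1 (c - 1/s) := le_min hx2 (by linarith)
      have he2 : c - x ≤ min 1 (c - 1/s) := le_trans (by linarith) he1
      nlinarith [mul_nonneg (sub_nonneg.2 he1) (sub_nonneg.2 he2)]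
    · rcases min_choice 1 (c - 1/s) with h | h
      · exact Or.inr (Or.inl h)
      · right; right; left; rw [h]; ring

private lemma lower_bound (n k0 : ℕ) (s : ℝ) (hs1 : 1 < s)
    (hk0 : IsLeast {k : ℕ | 1 ≤ k ∧ (n : ℝ) - k < s - k / s} k0) :
    ∀ (m : ℕ) (a : Fin n → ℝ), (∀ i, a i ∈ Set.Icc (1/s) 1) → ∑ i, a i = s →
      (univ.filter (fun i => a i ≠ 1/s ∧ a i ≠ 1)).card ≤ m →
      s ^ ((1:ℤ) - (k0:ℤ)) * (s - ((k0:ℝ) - 1)/s - (n:ℝ) + (k0:ℝ)) ≤ ∏ i, a i := by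
  intro m
  induction m with
  | zero =>
    intro a ha hsum hc
    exact le_of_eq (base_case n k0 s hs1 hk0 a ha hsum (le_trans hc (by norm_num))).symm
  | succ m ih =>
    intro a ha hsum hc
    by_cases hc1 : (univ.filter (fun i => a i ≠ 1/s ∧ a i ≠ 1)).card ≤ 1
    · exact le_of_eq (base_case n k0 s hs1 hk0 a ha hsum hc1).symm
    · push_neg at hc1
      obtain ⟨i, hiB, j, hjB, hij⟩ := Finset.one_lt_card.mp hc1
      have hji : j ≠ i := hij.symm
      have hi := (Finset.mem_filter.mp hiB).2
      have hj := (Finset.mem_filter.mp hjB).2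
      obtain ⟨e, ⟨he1, he2⟩, ⟨hf1, hf2⟩, hple, hbdry⟩ :=
        smooth_pair s (a i + a j) (a i) hs1 (ha i).1 (ha i).2
          (by have := (ha j).1; linarith [(ha j).1]) (by linarith [(ha j).2])
      set a' : Fin n → ℝ := fun k => if k = i then e else if k = j then a i + a j - e else a k
        with ha'def
      have ha'i : a' i = e := by simp [ha'def]
      have ha'j : a' j = a i + a j - e := by simp [ha'def, hji]
      have ha'k : ∀ k, k ≠ i → k ≠ j → a' k = a k := by
        intro k h1 h2; simp [ha'def, h1, h2]
      have ha' : ∀ k, a' k ∈ Set.Icc (1/s) 1 := by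
        intro k
        by_cases h1 : k = i
        · subst h1; rw [ha'i]; exact ⟨he1, he2⟩
        · by_cases h2 : k = j
          · subst h2; rw [ha'j]
            constructor
            · linarith [hf1]
            · linarith [hf2]
          · rw [ha'k k h1 h2]; exact ha k
      have hjmem : j ∈ univ.erase i := Finset.mem_erase.mpr ⟨hji, Finset.mem_univ j⟩
      have hrest_eq : ∀ k ∈ (univ.erase i).erase j, a' k = a k := by
        intro k hk
        have h2 := Finset.mem_erase.mp hk
        have h1 := Finset.mem_erase.mp h2.2
        exact ha'k k h1.1 h2.1
      have hsum' : ∑ k, a' k = s := by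
        rw [← Finset.add_sum_erase univ a' (Finset.mem_univ i),
          ← Finset.add_sum_erase _ a' hjmem,
          Finset.sum_congr rfl hrest_eq, ha'i, ha'j]
        rw [← Finset.add_sum_erase univ a (Finset.mem_univ i),
          ← Finset.add_sum_erase _ a hjmem] at hsum
        linarith [hsum]
      have hR : (0:ℝ) ≤ ∏ k ∈ (univ.erase i).erase j, a k :=
        Finset.prod_nonneg (fun k _ => le_trans (by positivity) (ha k).1)
      have hprod' : ∏ k, a' k ≤ ∏ k, a k := by
        rw [← Finset.mul_prod_erase univ a' (Finset.mem_univ i),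
          ← Finset.mul_prod_erase _ a' hjmem,
          Finset.prod_congr rfl hrest_eq, ha'i, ha'j,
          ← Finset.mul_prod_erase univ a (Finset.mem_univ i),
          ← Finset.mul_prod_erase _ a hjmem, ← mul_assoc, ← mul_assoc]
        apply mul_le_mul_of_nonneg_right _ hR
        have hc' : a i + a j - a i = a j := by ring
        rw [hc'] at hple
        exact hple
      -- a boundary witness
      obtain ⟨w, hwij, hwb⟩ : ∃ w : Fin n, (w = i ∨ w = j) ∧ (a' w = 1/s ∨ a' w = 1) := by
        rcases hbdry with h | h | h | h
        · exact ⟨i, Or.inl rfl, Or.inl (ha'i.trans h)⟩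
        · exact ⟨i, Or.inl rfl, Or.inr (ha'i.trans h)⟩
        · exact ⟨j, Or.inr rfl, Or.inl (ha'j.trans h)⟩
        · exact ⟨j, Or.inr rfl, Or.inr (ha'j.trans h)⟩
      have hwB : w ∈ univ.filter (fun i => a i ≠ 1/s ∧ a i ≠ 1) := by
        rcases hwij with rfl | rfl
        · exact hiB
        · exact hjB
      have hsub : univ.filter (fun k => a' k ≠ 1/s ∧ a' k ≠ 1) ⊆
          (univ.filter (fun i => a i ≠ 1/s ∧ a i ≠ 1)).erase w := by
        intro k hk
        have hk' := (Finset.mem_filter.mp hk).2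
        rw [Finset.mem_erase]
        constructor
        · rintro rfl
          rcases hwb with h | h
          · exact hk'.1 h
          · exact hk'.2 h
        · by_cases h1 : k = i
          · subst h1; exact hiB
          · by_cases h2 : k = j
            · subst h2; exact hjB
            · rw [ha'k k h1 h2] at hk'
              exact Finset.mem_filter.mpr ⟨Finset.mem_univ k, hk'⟩
      have hcard' : (univ.filter (fun k => a' k ≠ 1/s ∧ a' k ≠ 1)).card ≤ m := by
        have h1 := Finset.card_le_card hsub
        rw [Finset.card_erase_of_mem hwB] at h1
        omega
      exact le_trans (ih a' ha' hsum' hcard') hprod'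

/-- For `n ≥ 2`, `s ∈ [√n, n]` and `k₀(s) = min {k ≥ 1 : n - k < s - k/s}`, the minimum of
`a₁⋯aₙ` over `Σ_s = {a ∈ [1/s, 1]ⁿ : ∑ aᵢ = s}` equals
`s^(1-k₀(s)) (s - (k₀(s)-1)/s - n + k₀(s))`. -/
theorem stmt_9 (n : ℕ) (hn : 2 ≤ n) (s : ℝ) (hs : s ∈ Set.Icc (Real.sqrt n) (n : ℝ))
    (k0 : ℕ) (hk0 : IsLeast {k : ℕ | 1 ≤ k ∧ (n : ℝ) - k < s - k / s} k0) :
    IsLeast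
      {y : ℝ | ∃ a : Fin n → ℝ, (∀ i, a i ∈ Set.Icc (1 / s) 1) ∧ ∑ i, a i = s ∧ y = ∏ i, a i}
      (s ^ ((1 : ℤ) - (k0 : ℤ)) * (s - ((k0 : ℝ) - 1) / s - (n : ℝ) + (k0 : ℝ))) := by
  have hs1 : 1 < s := by
    have h1 : (1:ℝ) < Real.sqrt n := by
      rw [show (1:ℝ) = Real.sqrt 1 by simp]
      apply Real.sqrt_lt_sqrt (by norm_num)
      exact_mod_cast by omega
    linarith [hs.1]
  have hs0 : (0:ℝ) < s := by linarith
  have hinv : (1:ℝ)/s < 1 := by rw [div_lt_one hs0]; exact hs1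
  have hsq : (n:ℝ) ≤ s * s := by
    nlinarith [Real.sq_sqrt (show (0:ℝ) ≤ n by positivity), Real.sqrt_nonneg (n:ℝ), hs.1]
  have hk0n1 : k0 ≤ n + 1 := by
    apply hk0.2
    refine ⟨by omega, ?_⟩
    push_cast
    have h1 : ((n:ℝ) + 1)/s * s = (n:ℝ) + 1 := div_mul_cancel₀ _ (ne_of_gt hs0)
    nlinarith
  constructor
  · -- membership
    by_cases hcase : k0 ≤ n
    · have hk01 : 1 ≤ k0 := hk0.1.1
      obtain ⟨m, rfl⟩ : ∃ m, k0 = m + 1 := ⟨k0 - 1, by omega⟩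
      have hmn : m + 1 ≤ n := hcase
      set t : ℝ := s - (m:ℝ)/s - (n:ℝ) + m + 1 with htdef
      have ht1 : 1/s < t := by
        have h2 := hk0.1.2
        push_cast at h2
        rw [add_div] at h2
        rw [htdef]
        linarith
      have ht2 : t ≤ 1 := by
        rcases Nat.eq_zero_or_pos m with hm0 | hm1
        · subst hm0
          simp only [htdef, Nat.cast_zero]
          have := hs.2
          rw [zero_div]
          linarith
        · have hmnot : ¬ ((n:ℝ) - m < s - (m:ℝ)/s) := by
            intro hcon
            have := hk0.2 ⟨hm1, hcon⟩
            omega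
          push_neg at hmnot
          rw [htdef]
          linarith
      refine ⟨fun i => if (i:ℕ) < m then 1/s else if (i:ℕ) = m then t else 1, ?_, ?_, ?_⟩
      · intro i
        dsimp only
        split_ifs
        · exact ⟨le_refl _, le_of_lt hinv⟩
        · exact ⟨le_of_lt ht1, ht2⟩
        · exact ⟨le_of_lt hinv, le_refl _⟩
      · rw [Fin.sum_univ_eq_sum_range (fun x => if x < m then 1/s else if x = m then t else 1) n]
        rw [← Finset.sum_range_add_sum_Ico _ hmn, Finset.sum_range_succ]
        have h1 : ∑ x ∈ range m, (if x < m then 1/s else if x = m then t else (1:ℝ)) = m * (1/s) := by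
          rw [Finset.sum_congr rfl (fun x hx => by
            rw [if_pos (Finset.mem_range.mp hx)]), Finset.sum_const, nsmul_eq_mul,
            Finset.card_range]
        have h2 : (if m < m then 1/s else if m = m then t else (1:ℝ)) = t := by simp
        have h3 : ∑ x ∈ Finset.Ico (m+1) n, (if x < m then 1/s else if x = m then t else (1:ℝ))
            = ((n - (m+1) : ℕ) : ℝ) := by
          rw [Finset.sum_congr rfl (fun x hx => by
            have hx1 := (Finset.mem_Ico.mp hx).1
            rw [if_neg (by omega), if_neg (by omega)]), Finset.sum_const,
            Nat.card_Ico, nsmul_eq_mul, mul_one]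
        rw [h1, h2, h3]
        have hcast : ((n - (m+1) : ℕ) : ℝ) = (n:ℝ) - m - 1 := by
          rw [Nat.cast_sub hmn]; push_cast; ring
        rw [hcast, htdef]
        field_simp
        ring
      · rw [Fin.prod_univ_eq_prod_range (fun x => if x < m then 1/s else if x = m then t else 1) n]
        rw [← Finset.prod_range_mul_prod_Ico _ hmn, Finset.prod_range_succ]
        have h1 : ∏ x ∈ range m, (if x < m then 1/s else if x = m then t else (1:ℝ)) = (1/s)^m := by
          rw [Finset.prod_congr rfl (fun x hx => by
            rw [if_pos (Finset.mem_range.mp hx)]), Finset.prod_const, Finset.card_range]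
        have h2 : (if m < m then 1/s else if m = m then t else (1:ℝ)) = t := by simp
        have h3 : ∏ x ∈ Finset.Ico (m+1) n, (if x < m then 1/s else if x = m then t else (1:ℝ)) = 1 :=
          Finset.prod_eq_one (fun x hx => by
            have hx1 := (Finset.mem_Ico.mp hx).1
            rw [if_neg (by omega), if_neg (by omega)])
        rw [h1, h2, h3, mul_one]
        exact (final_form n (m+1) m s t hs0 rfl (by rw [htdef])).symm
    · -- k0 = n + 1, so s^2 = n and the all-(1/s) vector works
      have hk0eq : k0 = n + 1 := by omega
      have hnle : s * s ≤ n := by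
        have hnmem : ¬ ((n:ℝ) - n < s - (n:ℝ)/s) := by
          intro hcon
          have := hk0.2 ⟨by omega, hcon⟩
          omega
        push_neg at hnmem
        have h1 : (n:ℝ)/s * s = n := div_mul_cancel₀ _ (ne_of_gt hs0)
        nlinarith
      have hseq : s * s = n := le_antisymm hnle hsq
      refine ⟨fun _ => 1/s, fun i => ⟨le_refl _, le_of_lt hinv⟩, ?_, ?_⟩
      · rw [Finset.sum_const, nsmul_eq_mul]
        simp only [Finset.card_univ, Fintype.card_fin]
        rw [mul_one_div, ← hseq]
        field_simp
      · rw [Finset.prod_const]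
        simp only [Finset.card_univ, Fintype.card_fin]
        subst hk0eq
        have h1 : (1:ℤ) - ((n + 1 : ℕ) : ℤ) = -(n:ℤ) := by push_cast; ring
        rw [h1, zpow_neg, zpow_natCast, one_div, inv_pow]
        have h2 : s - (((n:ℕ) + 1 : ℕ) - 1 : ℝ)/s - (n:ℝ) + ((n + 1 : ℕ) : ℝ) = 1 := by
          push_cast
          have : (n:ℝ)/s = s := by rw [← hseq]; field_simp
          rw [show ((n:ℝ) + 1 - 1) = (n:ℝ) by ring, this]
          ring
        push_cast at h2 ⊢
        rw [h2, mul_one]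
  · -- lower bound
    rintro y ⟨a, ha, hsum, rfl⟩
    exact lower_bound n k0 s hs1 hk0 _ a ha hsum (le_refl _)
end

section
/- Let n ≥ 2 be an integer and let s ∈ [√n, n]. Then the minimum μ(s) of f(a) = a₁a₂⋯aₙ over Σ_s = {a ∈ [1/s, 1]ⁿ : ∑_{i=1}^{n} aᵢ = s} is given by μ(s) = (1/s + s - n + (⌊s(n-s)/(s-1)⌋ + 1)(1 - 1/s)) / s^{⌊s(n-s)/(s-1)⌋}. -/
open Finset

private lemma pair_min {s u v : ℝ} (hs : 1 ≤ s)
    (hu : u ∈ Set.Icc (1/s) 1) (hv : v ∈ Set.Icc (1/s) 1) :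
    ∃ u' v' : ℝ, u' ∈ Set.Icc (1/s) 1 ∧ v' ∈ Set.Icc (1/s) 1 ∧
      (u' = 1/s ∨ u' = 1) ∧ u' + v' = u + v ∧ u' * v' ≤ u * v := by
  obtain ⟨hu1, hu2⟩ := hu
  obtain ⟨hv1, hv2⟩ := hv
  have hs0 : 0 < s := lt_of_lt_of_le one_pos hs
  have h1s : (0:ℝ) < 1/s := by positivity
  have h1s1 : 1/s ≤ 1 := by rw [div_le_one hs0]; exact hs
  by_cases h : u + v ≤ 1 + 1/s
  · refine ⟨1/s, u + v - 1/s, ⟨le_refl _, h1s1⟩, ⟨by linarith, by linarith⟩,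
      Or.inl rfl, by ring, ?_⟩
    nlinarith [mul_nonneg (sub_nonneg.2 hu1) (sub_nonneg.2 hv1)]
  · refine ⟨1, u + v - 1, ⟨h1s1, le_refl 1⟩, ⟨by linarith, by linarith⟩,
      Or.inr rfl, by ring, ?_⟩
    nlinarith [mul_nonneg (sub_nonneg.2 hu2) (sub_nonneg.2 hv2)]

private lemma reduce_lb (n : ℕ) (s T : ℝ) (hs : 1 ≤ s)
    (hbase : ∀ a : Fin n → ℝ, (∀ i, a i ∈ Set.Icc (1/s) 1) → ∑ i, a i = s →
      (Finset.univ.filter (fun i => a i ≠ 1/s ∧ a i ≠ 1)).card ≤ 1 → T ≤ ∏ i, a i) :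
    ∀ a : Fin n → ℝ, (∀ i, a i ∈ Set.Icc (1/s) 1) → ∑ i, a i = s → T ≤ ∏ i, a i := by
  classical
  have hs0 : 0 < s := lt_of_lt_of_le one_pos hs
  suffices H : ∀ m : ℕ, ∀ a : Fin n → ℝ, (∀ i, a i ∈ Set.Icc (1/s) 1) → ∑ i, a i = s →
      (Finset.univ.filter (fun i => a i ≠ 1/s ∧ a i ≠ 1)).card = m → T ≤ ∏ i, a i by
    exact fun a ha hsum => H _ a ha hsum rfl
  intro m
  induction m using Nat.strong_induction_on with
  | _ m IH =>
    intro a ha hsum hm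
    by_cases hm1 : m ≤ 1
    · exact hbase a ha hsum (hm ▸ hm1)
    · have h2 : 1 < (univ.filter (fun i => a i ≠ 1/s ∧ a i ≠ 1)).card := by omega
      obtain ⟨i, hi, jj, hj, hij⟩ := Finset.one_lt_card.mp h2
      obtain ⟨u', v', hu', hv', hex, hsum2, hprod2⟩ := pair_min hs (ha i) (ha jj)
      set a' : Fin n → ℝ := fun x => if x = i then u' else if x = jj then v' else a x
        with ha'def
      have ha'i : a' i = u' := by simp [ha'def]
      have ha'j : a' jj = v' := by simp [ha'def, Ne.symm hij]
      have ha'x : ∀ x, x ≠ i → x ≠ jj → a' x = a x := by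
        intro x h1 h2; simp [ha'def, h1, h2]
      have ha' : ∀ x, a' x ∈ Set.Icc (1/s) 1 := by
        intro x
        simp only [ha'def]
        split_ifs
        exacts [hu', hv', ha x]
      have hjmem : jj ∈ Finset.univ.erase i := Finset.mem_erase.mpr ⟨Ne.symm hij, mem_univ _⟩
      have hsplit : ∀ f : Fin n → ℝ,
          ∑ x, f x = f i + (f jj + ∑ x ∈ (Finset.univ.erase i).erase jj, f x) := by
        intro f
        rw [← Finset.add_sum_erase _ f (Finset.mem_univ i), ← Finset.add_sum_erase _ f hjmem]
      have hpsplit : ∀ f : Fin n → ℝ,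
          ∏ x, f x = f i * (f jj * ∏ x ∈ (Finset.univ.erase i).erase jj, f x) := by
        intro f
        rw [← Finset.mul_prod_erase _ f (Finset.mem_univ i), ← Finset.mul_prod_erase _ f hjmem]
      have hEmem : ∀ x ∈ (Finset.univ.erase i).erase jj, a' x = a x := by
        intro x hx
        obtain ⟨hxj, hxi, -⟩ := Finset.mem_erase.mp hx |>.imp id (Finset.mem_erase.mp ·)
        exact ha'x x hxi hxj
      have hEsum : ∑ x ∈ (Finset.univ.erase i).erase jj, a' x
          = ∑ x ∈ (Finset.univ.erase i).erase jj, a x := Finset.sum_congr rfl hEmem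
      have hEprod : ∏ x ∈ (Finset.univ.erase i).erase jj, a' x
          = ∏ x ∈ (Finset.univ.erase i).erase jj, a x := Finset.prod_congr rfl hEmem
      have hsum' : ∑ x, a' x = s := by
        rw [hsplit a', ha'i, ha'j, hEsum]
        rw [hsplit a] at hsum
        linarith
      have hP : 0 ≤ ∏ x ∈ (Finset.univ.erase i).erase jj, a x :=
        Finset.prod_nonneg fun x _ => le_trans (by positivity) (ha x).1
      have hprodle : ∏ x, a' x ≤ ∏ x, a x := by
        rw [hpsplit a', hpsplit a, ha'i, ha'j, hEprod, ← mul_assoc, ← mul_assoc]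
        exact mul_le_mul_of_nonneg_right hprod2 hP
      have hsub : univ.filter (fun x => a' x ≠ 1/s ∧ a' x ≠ 1) ⊆
          (univ.filter (fun x => a x ≠ 1/s ∧ a x ≠ 1)).erase i := by
        intro x hx
        rw [Finset.mem_filter] at hx
        rcases eq_or_ne x i with rfl | hxi
        · exfalso
          rw [ha'i] at hx
          rcases hex with h | h
          · exact hx.2.1 h
          · exact hx.2.2 h
        · refine Finset.mem_erase.mpr ⟨hxi, ?_⟩
          rcases eq_or_ne x jj with rfl | hxj
          · exact hj
          · rw [ha'x x hxi hxj] at hx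
            exact Finset.mem_filter.mpr ⟨mem_univ _, hx.2⟩
      have hlt : (univ.filter (fun x => a' x ≠ 1/s ∧ a' x ≠ 1)).card < m := by
        have h1 := Finset.card_le_card hsub
        rw [Finset.card_erase_of_mem hi, hm] at h1
        omega
      exact le_trans (IH _ hlt a' ha' hsum' rfl) hprodle

private lemma base_case_s10 (n : ℕ) (s : ℝ) (hs : 1 < s) (hsn : s ≤ n) :
    ∀ a : Fin n → ℝ, (∀ i, a i ∈ Set.Icc (1/s) 1) → ∑ i, a i = s →
      (Finset.univ.filter (fun i => a i ≠ 1/s ∧ a i ≠ 1)).card ≤ 1 →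
      (s - n + 1 + (Nat.floor (s * (n - s) / (s - 1)) : ℝ) * (1 - 1/s)) /
          s ^ Nat.floor (s * (n - s) / (s - 1)) ≤ ∏ i, a i := by
  classical
  intro a ha hsum hcard
  have hs0 : 0 < s := by linarith
  have hsm1 : 0 < s - 1 := by linarith
  obtain ⟨x, hxdef⟩ : ∃ y : ℝ, y = s * ((n:ℝ) - s) / (s - 1) := ⟨_, rfl⟩
  rw [show s * ((n:ℝ) - s) / (s - 1) = x from hxdef.symm]
  have hx0 : 0 ≤ x := by
    rw [hxdef]; exact div_nonneg (by nlinarith) (by linarith)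
  obtain ⟨k, hkdef⟩ : ∃ m : ℕ, m = Nat.floor x := ⟨_, rfl⟩
  rw [show Nat.floor x = k from hkdef.symm]
  have hkx : (k:ℝ) ≤ x := by rw [hkdef]; exact Nat.floor_le hx0
  have hxk : x < (k:ℝ) + 1 := by rw [hkdef]; exact Nat.lt_floor_add_one x
  have hx2 : x * (1 - 1/s) = (n:ℝ) - s := by
    rw [hxdef, div_mul_eq_mul_div, div_eq_iff hsm1.ne']
    field_simp
  have h1s : (0:ℝ) < 1 - 1/s := by
    have : 1/s < 1 := by rw [div_lt_one hs0]; exact hs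
    linarith
  obtain ⟨J, hJ⟩ : ∃ t, t = Finset.univ.filter (fun i : Fin n => a i = 1/s) := ⟨_, rfl⟩
  obtain ⟨S', hS'⟩ : ∃ t, t = Finset.univ.filter (fun i : Fin n => ¬ a i = 1/s) := ⟨_, rfl⟩
  obtain ⟨O, hO⟩ : ∃ t, t = S'.filter (fun i => a i = 1) := ⟨_, rfl⟩
  obtain ⟨B, hB⟩ : ∃ t, t = S'.filter (fun i => ¬ a i = 1) := ⟨_, rfl⟩
  have hBeq : B = Finset.univ.filter (fun i => a i ≠ 1/s ∧ a i ≠ 1) := by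
    rw [hB, hS', Finset.filter_filter]
  have hsum1 : (∑ i ∈ J, a i) + ∑ i ∈ S', a i = s := by
    rw [hJ, hS', Finset.sum_filter_add_sum_filter_not]; exact hsum
  have hsum2 : (∑ i ∈ O, a i) + ∑ i ∈ B, a i = ∑ i ∈ S', a i := by
    rw [hO, hB]; exact Finset.sum_filter_add_sum_filter_not _ _ _
  have hprod1 : (∏ i ∈ J, a i) * ∏ i ∈ S', a i = ∏ i, a i := by
    rw [hJ, hS']; exact Finset.prod_filter_mul_prod_filter_not _ _ _
  have hprod2 : (∏ i ∈ O, a i) * ∏ i ∈ B, a i = ∏ i ∈ S', a i := by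
    rw [hO, hB]; exact Finset.prod_filter_mul_prod_filter_not _ _ _
  have hcard1 : J.card + S'.card = n := by
    rw [hJ, hS', Finset.card_filter_add_card_filter_not, Finset.card_univ,
      Fintype.card_fin]
  have hcard2 : O.card + B.card = S'.card := by
    rw [hO, hB]; exact Finset.card_filter_add_card_filter_not _
  have hmemJ : ∀ i ∈ J, a i = 1/s := by
    intro i hi; rw [hJ] at hi; exact (Finset.mem_filter.mp hi).2
  have hmemO : ∀ i ∈ O, a i = 1 := by
    intro i hi; rw [hO] at hi; exact (Finset.mem_filter.mp hi).2
  have hsumJ : ∑ i ∈ J, a i = J.card * (1/s) := by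
    rw [Finset.sum_congr rfl hmemJ, Finset.sum_const, nsmul_eq_mul]
  have hsumO : ∑ i ∈ O, a i = O.card := by
    rw [Finset.sum_congr rfl hmemO, Finset.sum_const, nsmul_eq_mul, mul_one]
  have hprodJ : ∏ i ∈ J, a i = (1/s)^J.card := by
    rw [Finset.prod_congr rfl hmemJ, Finset.prod_const]
  have hprodO : ∏ i ∈ O, a i = 1 := Finset.prod_eq_one hmemO
  obtain ⟨j, hjdef⟩ : ∃ m, m = J.card := ⟨_, rfl⟩
  rw [← hjdef] at hsumJ hprodJ hcard1
  have hcardB : B.card ≤ 1 := by rw [hBeq]; exact hcard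
  rcases Nat.le_one_iff_eq_zero_or_eq_one.mp hcardB with hB1 | hB1
  · -- B empty
    have hBempty : B = ∅ := Finset.card_eq_zero.mp hB1
    have hOn : (O.card : ℝ) = (n:ℝ) - j := by
      have h' : j + O.card = n := by omega
      have h'' := congrArg (Nat.cast : ℕ → ℝ) h'
      push_cast at h''
      linarith
    have hseq : (j:ℝ) * (1/s) + ((n:ℝ) - j) = s := by
      rw [hBempty, Finset.sum_empty, add_zero, hsumO, hOn] at hsum2
      rw [hsumJ, ← hsum2] at hsum1
      exact hsum1
    have h3 : (j:ℝ) + ((n:ℝ) - j) * s = s * s := by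
      have h2 : ((j:ℝ) * (1/s) + ((n:ℝ) - j)) * s = s * s := by rw [hseq]
      have hjs : (j:ℝ) * (1/s) * s = j := by field_simp
      rw [add_mul, hjs] at h2
      exact h2
    have hjx : (j:ℝ) = x := by
      rw [hxdef, eq_div_iff hsm1.ne']
      linear_combination (-1 : ℝ) * h3
    have hkj : k = j := by rw [hkdef, ← hjx, Nat.floor_natCast]
    have hnum : s - (n:ℝ) + 1 + (k:ℝ) * (1 - 1/s) = 1 := by
      have hkr : (k:ℝ) = (j:ℝ) := by exact_mod_cast hkj
      rw [hkr]
      linear_combination (-1 : ℝ) * hseq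
    have hprodeq : ∏ i, a i = (1/s)^j := by
      rw [← hprod1, ← hprod2, hprodJ, hprodO, hBempty, Finset.prod_empty]
      ring
    rw [hprodeq, hnum, hkj]
    apply le_of_eq
    simp [one_div]
  · -- B singleton
    obtain ⟨i0, hi0⟩ := Finset.card_eq_one.mp hB1
    have hi0B : i0 ∈ B := by rw [hi0]; exact Finset.mem_singleton_self i0
    have hi0f : i0 ∈ Finset.univ.filter (fun i => a i ≠ 1/s ∧ a i ≠ 1) := hBeq ▸ hi0B
    obtain ⟨-, hne1, hne2⟩ := Finset.mem_filter.mp hi0f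
    have hsumB : ∑ i ∈ B, a i = a i0 := by rw [hi0, Finset.sum_singleton]
    have hprodB : ∏ i ∈ B, a i = a i0 := by rw [hi0, Finset.prod_singleton]
    obtain ⟨c, hcdef⟩ : ∃ y, y = a i0 := ⟨_, rfl⟩
    rw [← hcdef] at hsumB hprodB hne1 hne2
    have hclt : c < 1 := lt_of_le_of_ne (hcdef ▸ (ha i0).2) hne2
    have hcgt : 1/s < c := lt_of_le_of_ne (hcdef ▸ (ha i0).1) (Ne.symm hne1)
    have hOn : (O.card : ℝ) = (n:ℝ) - j - 1 := by
      have h' : j + (O.card + 1) = n := by omega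
      have h'' := congrArg (Nat.cast : ℕ → ℝ) h'
      push_cast at h''
      linarith
    have hseq : (j:ℝ) * (1/s) + ((n:ℝ) - j - 1) + c = s := by
      rw [hsumO, hOn, hsumB] at hsum2
      rw [hsumJ, ← hsum2] at hsum1
      linarith
    have hjltx : (j:ℝ) < x := by
      by_contra h
      push_neg at h
      nlinarith [mul_nonneg (sub_nonneg.2 h) h1s.le]
    have hxltj : x < (j:ℝ) + 1 := by
      by_contra h
      push_neg at h
      nlinarith [mul_nonneg (sub_nonneg.2 h) h1s.le]
    have hjk : j = k := by
      have h1 : j ≤ k := by rw [hkdef]; exact Nat.le_floor (le_of_lt hjltx)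
      have h2 : k < j + 1 := by
        rw [hkdef]
        refine (Nat.floor_lt hx0).mpr ?_
        push_cast
        exact hxltj
      omega
    have hceq : c = s - (n:ℝ) + 1 + (k:ℝ) * (1 - 1/s) := by
      have hkr : (k:ℝ) = (j:ℝ) := by exact_mod_cast hjk.symm
      rw [hkr]
      linear_combination hseq
    have hprodeq : ∏ i, a i = (1/s)^j * c := by
      rw [← hprod1, ← hprod2, hprodJ, hprodO, hprodB]
      ring
    rw [hprodeq, ← hceq, hjk]
    apply le_of_eq
    rw [div_eq_mul_inv, one_div, inv_pow, mul_comm]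

/-- For `n ≥ 2` and `s ∈ [√n, n]`, the minimum `μ(s)` of `a₁⋯aₙ` over
`Σ_s = {a ∈ [1/s, 1]ⁿ : ∑ aᵢ = s}` equals
`(1/s + s - n + (⌊s(n-s)/(s-1)⌋ + 1)(1 - 1/s)) / s^⌊s(n-s)/(s-1)⌋`. -/
theorem stmt_10 (n : ℕ) (hn : 2 ≤ n) (s : ℝ) (hs : s ∈ Set.Icc (Real.sqrt n) (n : ℝ)) :
    IsLeast
      {y : ℝ | ∃ a : Fin n → ℝ, (∀ i, a i ∈ Set.Icc (1 / s) 1) ∧ ∑ i, a i = s ∧ y = ∏ i, a i}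
      ((1 / s + s - n + ((Nat.floor (s * (n - s) / (s - 1)) : ℝ) + 1) * (1 - 1 / s)) /
        s ^ Nat.floor (s * (n - s) / (s - 1))) := by
  classical
  obtain ⟨hs1, hs2⟩ := hs
  have hn2 : (2:ℝ) ≤ (n:ℝ) := by exact_mod_cast hn
  have hn0 : (0:ℝ) ≤ (n:ℝ) := by linarith
  have hs_gt1 : 1 < s := by
    have h1 : (1:ℝ) < Real.sqrt n := by
      have : Real.sqrt 1 < Real.sqrt n := Real.sqrt_lt_sqrt (by norm_num) (by linarith)
      simpa using this
    linarith
  have hs0 : 0 < s := by linarith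
  have hsm1 : 0 < s - 1 := by linarith
  have hns : (n:ℝ) ≤ s^2 := by
    have h1 := Real.sq_sqrt hn0
    have h2 : Real.sqrt n ^ 2 ≤ s ^ 2 := by
      apply pow_le_pow_left₀ (Real.sqrt_nonneg _) hs1
    linarith
  have h1s : (0:ℝ) < 1 - 1/s := by
    have : 1/s < 1 := by rw [div_lt_one hs0]; exact hs_gt1
    linarith
  obtain ⟨x, hxdef⟩ : ∃ y : ℝ, y = s * ((n:ℝ) - s) / (s - 1) := ⟨_, rfl⟩
  rw [show s * ((n:ℝ) - s) / (s - 1) = x from hxdef.symm]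
  have hx0 : 0 ≤ x := by
    rw [hxdef]; exact div_nonneg (by nlinarith) (by linarith)
  obtain ⟨k, hkdef⟩ : ∃ m : ℕ, m = Nat.floor x := ⟨_, rfl⟩
  rw [show Nat.floor x = k from hkdef.symm]
  have hkx : (k:ℝ) ≤ x := by rw [hkdef]; exact Nat.floor_le hx0
  have hxk : x < (k:ℝ) + 1 := by rw [hkdef]; exact Nat.lt_floor_add_one x
  have hx2 : x * (1 - 1/s) = (n:ℝ) - s := by
    rw [hxdef, div_mul_eq_mul_div, div_eq_iff hsm1.ne']
    field_simp
  have hxn : x ≤ (n:ℝ) := by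
    rw [hxdef, div_le_iff₀ hsm1]
    nlinarith
  have hkn : k ≤ n := by
    have : (k:ℝ) ≤ (n:ℝ) := le_trans hkx hxn
    exact_mod_cast this
  obtain ⟨t, htdef⟩ : ∃ y : ℝ, y = s - (n:ℝ) + 1 + (k:ℝ) * (1 - 1/s) := ⟨_, rfl⟩
  have ht1 : t ≤ 1 := by
    rw [htdef]
    nlinarith [mul_nonneg (sub_nonneg.2 hkx) h1s.le]
  have ht2 : 1/s ≤ t := by
    rw [htdef]
    nlinarith [mul_nonneg (sub_nonneg.2 hxk.le) h1s.le]
  have hTeq : (1 / s + s - ↑n + ((k:ℝ) + 1) * (1 - 1 / s)) / s ^ k = t / s ^ k := by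
    rw [htdef]; congr 1; ring
  rw [hTeq]
  constructor
  · -- membership
    rcases lt_or_eq_of_le hkn with hkn' | hkn'
    · -- k < n : use k coords 1/s, one coord t, rest 1
      have hk1n : k + 1 ≤ n := hkn'
      set g : ℕ → ℝ := fun m => if m < k then 1/s else if m = k then t else 1 with hg
      refine ⟨fun i => g i.val, ?_, ?_, ?_⟩
      · intro i
        simp only [hg]
        split_ifs
        · exact ⟨le_refl _, by rw [div_le_one hs0]; linarith⟩
        · exact ⟨ht2, ht1⟩
        · exact ⟨by rw [div_le_one hs0]; linarith, le_refl 1⟩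
      · have h0 : ∑ i : Fin n, g i.val = ∑ i ∈ Finset.range n, g i :=
          Fin.sum_univ_eq_sum_range g n
        have h1 : ∑ i ∈ Finset.range (k+1), g i + ∑ i ∈ Finset.Ico (k+1) n, g i
            = ∑ i ∈ Finset.range n, g i := by
          simp only [Finset.range_eq_Ico]
          exact Finset.sum_Ico_consecutive _ (Nat.zero_le _) hk1n
        have h2 : ∑ i ∈ Finset.range (k+1), g i = (k:ℝ) * (1/s) + t := by
          rw [Finset.sum_range_succ]
          have : ∀ i ∈ Finset.range k, g i = 1/s := by
            intro i hi
            simp only [hg, if_pos (Finset.mem_range.mp hi)]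
          rw [Finset.sum_congr rfl this, Finset.sum_const, Finset.card_range, nsmul_eq_mul]
          simp [hg]
        have h3 : ∑ i ∈ Finset.Ico (k+1) n, g i = (n:ℝ) - k - 1 := by
          have : ∀ i ∈ Finset.Ico (k+1) n, g i = 1 := by
            intro i hi
            obtain ⟨hi1, -⟩ := Finset.mem_Ico.mp hi
            simp only [hg, if_neg (by omega : ¬ i < k), if_neg (by omega : ¬ i = k)]
          rw [Finset.sum_congr rfl this, Finset.sum_const, Nat.card_Ico, nsmul_eq_mul, mul_one]
          have : ((n - (k+1) : ℕ) : ℝ) = (n:ℝ) - k - 1 := by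
            rw [Nat.cast_sub hk1n]; push_cast; ring
          exact this
        rw [h0, ← h1, h2, h3, htdef]
        ring
      · have h0 : ∏ i : Fin n, g i.val = ∏ i ∈ Finset.range n, g i :=
          Fin.prod_univ_eq_prod_range g n
        have h1 : (∏ i ∈ Finset.range (k+1), g i) * ∏ i ∈ Finset.Ico (k+1) n, g i
            = ∏ i ∈ Finset.range n, g i := by
          simp only [Finset.range_eq_Ico]
          exact Finset.prod_Ico_consecutive _ (Nat.zero_le _) hk1n
        have h2 : ∏ i ∈ Finset.range (k+1), g i = (1/s)^k * t := by
          rw [Finset.prod_range_succ]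
          have : ∀ i ∈ Finset.range k, g i = 1/s := by
            intro i hi
            simp only [hg, if_pos (Finset.mem_range.mp hi)]
          rw [Finset.prod_congr rfl this, Finset.prod_const, Finset.card_range]
          simp [hg]
        have h3 : ∏ i ∈ Finset.Ico (k+1) n, g i = 1 := by
          apply Finset.prod_eq_one
          intro i hi
          obtain ⟨hi1, -⟩ := Finset.mem_Ico.mp hi
          simp only [hg, if_neg (by omega : ¬ i < k), if_neg (by omega : ¬ i = k)]
        rw [h0, ← h1, h2, h3, mul_one, one_div, inv_pow, mul_comm, div_eq_mul_inv]
    · -- k = n : all coordinates 1/s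
      have hxeqn : x = (n:ℝ) := by
        have h' : ((n:ℕ):ℝ) ≤ x := by rw [← hkn']; exact hkx
        push_cast at h'
        linarith
      have hsn2 : s^2 = (n:ℝ) := by
        have := hx2
        rw [hxeqn] at this
        have h' : (n:ℝ) * (1 - 1/s) * s = ((n:ℝ) - s) * s := by rw [this]
        field_simp at h'
        nlinarith [h']
      refine ⟨fun _ => 1/s, ?_, ?_, ?_⟩
      · intro i
        exact ⟨le_refl _, by rw [div_le_one hs0]; linarith⟩
      · rw [Finset.sum_const, Finset.card_univ, Fintype.card_fin, nsmul_eq_mul]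
        rw [← hsn2]
        field_simp
      · rw [Finset.prod_const, Finset.card_univ, Fintype.card_fin]
        have htval : t = 1 := by
          have hkr : (k:ℝ) = (n:ℝ) := by exact_mod_cast hkn'
          rw [htdef, hkr, ← hsn2]
          field_simp
          ring
        rw [htval, ← hkn']
        simp [one_div]
  · -- lower bound
    intro y hy
    obtain ⟨a, ha, hsuma, rfl⟩ := hy
    have hb := base_case_s10 n s hs_gt1 hs2
    rw [show s * ((n:ℝ) - s) / (s - 1) = x from hxdef.symm,
      show Nat.floor x = k from hkdef.symm] at hb
    have hb' : ∀ a : Fin n → ℝ, (∀ i, a i ∈ Set.Icc (1/s) 1) → ∑ i, a i = s →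
        (Finset.univ.filter (fun i => a i ≠ 1/s ∧ a i ≠ 1)).card ≤ 1 →
        t / s ^ k ≤ ∏ i, a i := by
      intro a' ha' hsum' hc'
      have := hb a' ha' hsum' hc'
      rwa [← htdef] at this
    exact reduce_lb n s (t / s ^ k) hs_gt1.le hb' a ha hsuma
end

section
/- Let n ≥ 2 be an integer, let s ∈ [√n, n], and set k₀(s) = min{k ∈ ℕ, k ≥ 1 : n - k < s - k/s}. Then n - k₀(s) = ⌊s - k₀(s)/s⌋. -/
/-- For `n ≥ 2`, `s ∈ [√n, n]` and `k₀(s) = min {k ≥ 1 : n - k < s - k/s}`, one has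
`n - k₀(s) = ⌊s - k₀(s)/s⌋`. -/
theorem stmt_11 (n : ℕ) (hn : 2 ≤ n) (s : ℝ) (hs : s ∈ Set.Icc (Real.sqrt n) (n : ℝ))
    (k0 : ℕ) (hk0 : IsLeast {k : ℕ | 1 ≤ k ∧ (n : ℝ) - k < s - k / s} k0) :
    (n : ℤ) - (k0 : ℤ) = Int.floor (s - (k0 : ℝ) / s) := by
  obtain ⟨⟨hk1, hlt⟩, hmin⟩ := hk0
  have hspos : 0 < s := by
    have h1 : (1 : ℝ) ≤ Real.sqrt n := by
      rw [show (1:ℝ) = Real.sqrt 1 by simp]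
      exact Real.sqrt_le_sqrt (by exact_mod_cast Nat.one_le_of_lt hn)
    linarith [hs.1]
  symm
  rw [Int.floor_eq_iff]
  constructor
  · push_cast
    linarith
  · push_cast
    rcases eq_or_lt_of_le hk1 with h1 | h2
    · -- k0 = 1
      have h1s : 0 < 1 / s := by positivity
      have hsn : s ≤ (n : ℝ) := hs.2
      rw [← h1]
      push_cast
      nlinarith
    · -- k0 ≥ 2: k0 - 1 not in set
      have hk2 : 2 ≤ k0 := h2
      have hnot : ¬ (1 ≤ k0 - 1 ∧ (n : ℝ) - (k0 - 1 : ℕ) < s - (k0 - 1 : ℕ) / s) := by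
        intro h
        have := hmin h
        omega
      push_neg at hnot
      have h1' : 1 ≤ k0 - 1 := by omega
      have hge := hnot h1'
      have hcast : ((k0 - 1 : ℕ) : ℝ) = (k0 : ℝ) - 1 := by
        push_cast [Nat.cast_sub (by omega : 1 ≤ k0)]; ring
      rw [hcast] at hge
      have h1s : 0 < 1 / s := by positivity
      have : s - ((k0:ℝ) - 1) / s = s - k0 / s + 1 / s := by field_simp; ring
      rw [this] at hge
      linarith
end

section
/- Let n ≥ 2 be an integer and define μ : [√n, n] → ℝ by μ(s) = min{a₁a₂⋯aₙ : a ∈ [1/s, 1]ⁿ, ∑_{i=1}^{n} aᵢ = s}. Then μ is lower semicontinuous on [√n, n]. -/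
open Filter Finset

/-- The feasible-value set. -/
def SetS (n : ℕ) (s : ℝ) : Set ℝ :=
  {y : ℝ | ∃ a : Fin n → ℝ, (∀ i, a i ∈ Set.Icc (1 / s) 1) ∧ ∑ i, a i = s ∧ y = ∏ i, a i}

lemma prod_bound_aux (n : ℕ) (a b : Fin n → ℝ) (c : ℝ)
    (hb0 : ∀ i, 0 ≤ b i) (hab : ∀ i, b i ≤ a i * c) :
    ∏ i, b i ≤ c ^ n * ∏ i, a i := by
  calc ∏ i, b i ≤ ∏ i, (a i * c) :=
        Finset.prod_le_prod (fun i _ => hb0 i) (fun i _ => hab i)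
    _ = c ^ n * ∏ i, a i := by
        rw [Finset.prod_mul_distrib, Finset.prod_const, Finset.card_univ, Fintype.card_fin,
          mul_comm]

lemma sqrt_facts (n : ℕ) (hn : 2 ≤ n) (s : ℝ) (hs : Real.sqrt n ≤ s) :
    0 < s ∧ (n : ℝ) ≤ s * s ∧ 1 < s := by
  have hn0 : (0:ℝ) < n := by positivity
  have h1 : (0:ℝ) < Real.sqrt n := Real.sqrt_pos.mpr hn0
  have hs0 : 0 < s := lt_of_lt_of_le h1 hs
  have hnss : (n : ℝ) ≤ s * s := by
    have h2 := Real.mul_self_sqrt (le_of_lt hn0)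
    nlinarith [Real.sqrt_nonneg (n:ℝ)]
  have hn2 : (2:ℝ) ≤ n := by exact_mod_cast hn
  exact ⟨hs0, hnss, by nlinarith⟩

/-- Nonemptiness of the feasible set. -/
lemma SetS_nonempty (n : ℕ) (hn : 2 ≤ n) (s : ℝ) (hs : s ∈ Set.Icc (Real.sqrt n) (n:ℝ)) :
    (SetS n s).Nonempty := by
  obtain ⟨hs0, hnss, h1s⟩ := sqrt_facts n hn s hs.1
  have hn0 : (0:ℝ) < n := by positivity
  refine ⟨(s/n) ^ n, fun _ => s / n, fun i => ⟨?_, ?_⟩, ?_, ?_⟩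
  · rw [div_le_div_iff₀ hs0 hn0]; nlinarith
  · rw [div_le_one hn0]; exact hs.2
  · rw [Finset.sum_const, Finset.card_univ, Fintype.card_fin, nsmul_eq_mul,
      mul_div_cancel₀ _ (ne_of_gt hn0)]
  · rw [Finset.prod_const, Finset.card_univ, Fintype.card_fin]

lemma SetS_lb (n : ℕ) (hn : 2 ≤ n) (s : ℝ) (hs : s ∈ Set.Icc (Real.sqrt n) (n:ℝ)) :
    ∀ z ∈ SetS n s, (1/(n:ℝ)) ^ n ≤ z := by
  obtain ⟨hs0, hnss, h1s⟩ := sqrt_facts n hn s hs.1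
  have hn0 : (0:ℝ) < n := by positivity
  rintro z ⟨a, ha, hsum, rfl⟩
  calc (1/(n:ℝ)) ^ n = ∏ _i : Fin n, (1/(n:ℝ)) := by
        rw [Finset.prod_const, Finset.card_univ, Fintype.card_fin]
    _ ≤ ∏ i, a i := by
        refine Finset.prod_le_prod (fun i _ => by positivity) (fun i _ => ?_)
        exact le_trans (one_div_le_one_div_of_le hs0 hs.2) (ha i).1

lemma SetS_bdd (n : ℕ) (hn : 2 ≤ n) (s : ℝ) (hs : s ∈ Set.Icc (Real.sqrt n) (n:ℝ)) :
    BddBelow (SetS n s) :=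
  ⟨(1/(n:ℝ)) ^ n, fun z hz => SetS_lb n hn s hs z hz⟩

lemma SetS_nonneg (n : ℕ) (hn : 2 ≤ n) (s : ℝ)
    (hs : s ∈ Set.Icc (Real.sqrt n) (n:ℝ)) {z : ℝ} (hz : z ∈ SetS n s) : 0 ≤ z :=
  le_trans (by positivity) (SetS_lb n hn s hs z hz)

/-- Right transfer: from a point feasible for `s > s₀` build one feasible for `s₀`. -/
lemma right_lem (n : ℕ) (hn : 2 ≤ n) (s₀ s : ℝ)
    (h0 : Real.sqrt n ≤ s₀) (h1 : s₀ < s) (h2 : s ≤ n)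
    (a : Fin n → ℝ) (ha : ∀ i, a i ∈ Set.Icc (1/s) 1) (hsum : ∑ i, a i = s) :
    ∃ b : Fin n → ℝ, (∀ i, b i ∈ Set.Icc (1/s₀) 1) ∧ ∑ i, b i = s₀ ∧
      ∏ i, b i ≤ (1 + (s - s₀)) ^ n * ∏ i, a i := by
  obtain ⟨hs₀0, hnss₀, h1s₀⟩ := sqrt_facts n hn s₀ h0
  have hs0 : 0 < s := lt_trans hs₀0 h1
  have hn0 : (0:ℝ) < n := by positivity
  have hD : 0 < s - n/s := by
    rw [sub_pos, div_lt_iff₀ hs0]; nlinarith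
  have hN : 0 ≤ s₀ - n/s₀ := by
    rw [sub_nonneg, div_le_iff₀ hs₀0]; nlinarith
  set r : ℝ := (s₀ - n/s₀) / (s - n/s) with hr
  have hr0 : 0 ≤ r := div_nonneg hN (le_of_lt hD)
  have hr1 : r ≤ 1 := by
    rw [hr, div_le_one hD]
    have : n/s ≤ n/s₀ := div_le_div_of_nonneg_left (le_of_lt hn0) hs₀0 (le_of_lt h1)
    linarith
  -- key upper-constraint inequality
  have step2 : (1 - 1/s) * r ≤ 1 - 1/s₀ := by
    rw [hr, ← mul_div_assoc, div_le_iff₀ hD]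
    have key : (s - 1) * (s₀*s₀ - n) ≤ (s₀ - 1) * (s*s - n) := by
      have hsub : (0:ℝ) ≤ s*s₀ + n - s - s₀ := by
        nlinarith [mul_nonneg (sub_nonneg.mpr (le_of_lt h1s₀))
          (sub_nonneg.mpr (le_of_lt (lt_trans h1s₀ h1)))]
      nlinarith [mul_nonneg (sub_nonneg.mpr (le_of_lt h1)) hsub]
    have e1 : (1 - 1/s) * (s₀ - n/s₀) * (s*s₀) = (s-1)*(s₀*s₀-n) := by
      field_simp
      try ring
      try exact Or.inl trivial
    have e2 : (1 - 1/s₀) * (s - n/s) * (s*s₀) = (s₀-1)*(s*s-n) := by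
      field_simp
      try ring
      try exact Or.inl trivial
    nlinarith [key, e1, e2, mul_pos hs0 hs₀0]
  refine ⟨fun i => 1/s₀ + (a i - 1/s) * r, fun i => ⟨?_, ?_⟩, ?_, ?_⟩
  · have := mul_nonneg (sub_nonneg.mpr (ha i).1) hr0
    simp only []
    linarith
  · have step1 : (a i - 1/s) * r ≤ (1 - 1/s) * r :=
      mul_le_mul_of_nonneg_right (by linarith [(ha i).2]) hr0
    linarith
  · -- sum
    have hsum' : ∑ i, (1/s₀ + (a i - 1/s) * r) =
        (n:ℝ) * (1/s₀) + (s - (n:ℝ) * (1/s)) * r := by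
      rw [Finset.sum_add_distrib, Finset.sum_const, Finset.card_univ, Fintype.card_fin,
        ← Finset.sum_mul, Finset.sum_sub_distrib, hsum, Finset.sum_const, Finset.card_univ,
        Fintype.card_fin, nsmul_eq_mul, nsmul_eq_mul]
    rw [hsum', hr, show s - (n:ℝ) * (1/s) = s - n/s by ring,
      mul_div_cancel₀ _ (ne_of_gt hD)]
    ring
  · -- product bound
    refine prod_bound_aux n a _ _ (fun i => ?_) (fun i => ?_)
    · show 0 ≤ 1/s₀ + (a i - 1/s) * r
      have := mul_nonneg (sub_nonneg.mpr (ha i).1) hr0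
      positivity
    · show 1/s₀ + (a i - 1/s) * r ≤ a i * (1 + (s - s₀))
      have step1 : (a i - 1/s) * r ≤ a i - 1/s :=
        mul_le_of_le_one_right (sub_nonneg.mpr (ha i).1) hr1
      have hais : 1 ≤ a i * s := by
        have h3 := mul_le_mul_of_nonneg_right (ha i).1 (le_of_lt hs0)
        rwa [one_div, inv_mul_cancel₀ (ne_of_gt hs0)] at h3
      have step2' : 1/s₀ - 1/s ≤ a i * (s - s₀) := by
        have e1 : 1/s₀ - 1/s = (s-s₀)/(s₀*s) := by field_simp
        rw [e1, div_le_iff₀ (by positivity)]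
        nlinarith [hais, mul_le_mul_of_nonneg_right hais
          (mul_nonneg (sub_nonneg.mpr (le_of_lt h1)) (by linarith : (0:ℝ) ≤ s₀ - 1))]
      linarith [step1, step2']

/-- Left transfer: from a point feasible for `s < s₀ < n` build one feasible for `s₀`. -/
lemma left_lem (n : ℕ) (hn : 2 ≤ n) (s₀ s : ℝ)
    (h0 : Real.sqrt n ≤ s) (h1 : s < s₀) (h2 : s₀ < n)
    (a : Fin n → ℝ) (ha : ∀ i, a i ∈ Set.Icc (1/s) 1) (hsum : ∑ i, a i = s) :
    ∃ b : Fin n → ℝ, (∀ i, b i ∈ Set.Icc (1/s₀) 1) ∧ ∑ i, b i = s₀ ∧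
      ∏ i, b i ≤ (1 + (n * (s₀ - s))/(n - s₀)) ^ n * ∏ i, a i := by
  obtain ⟨hs0, hnss, h1s⟩ := sqrt_facts n hn s h0
  have hn0 : (0:ℝ) < n := by positivity
  have hns₀ : 0 < (n:ℝ) - s₀ := by linarith
  have hns : 0 < (n:ℝ) - s := by linarith
  set r : ℝ := ((n:ℝ) - s₀) / ((n:ℝ) - s) with hr
  have hr0 : 0 ≤ r := le_of_lt (div_pos hns₀ hns)
  have hr1 : r ≤ 1 := by rw [hr, div_le_one hns]; linarith
  have h1r : 1 - r = (s₀ - s)/((n:ℝ) - s) := by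
    rw [hr]; field_simp; ring
  refine ⟨fun i => 1 - (1 - a i) * r, fun i => ⟨?_, ?_⟩, ?_, ?_⟩
  · -- lower bound 1/s₀
    show 1/s₀ ≤ 1 - (1 - a i) * r
    have step1 : (1 - a i) * r ≤ (1 - 1/s) * r :=
      mul_le_mul_of_nonneg_right (by linarith [(ha i).1]) hr0
    have step2 : (1 - 1/s) * r ≤ 1 - 1/s := by
      apply mul_le_of_le_one_right ?_ hr1
      have : 1/s ≤ 1 := by rw [div_le_one hs0]; linarith
      linarith
    have hss₀ : 1/s₀ ≤ 1/s := one_div_le_one_div_of_le hs0 (le_of_lt h1)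
    linarith
  · show 1 - (1 - a i) * r ≤ 1
    have := mul_nonneg (by linarith [(ha i).2] : (0:ℝ) ≤ 1 - a i) hr0
    linarith
  · -- sum
    have hsum' : ∑ i, (1 - (1 - a i) * r) = (n:ℝ) - ((n:ℝ) - s) * r := by
      rw [Finset.sum_sub_distrib, ← Finset.sum_mul, Finset.sum_sub_distrib, hsum,
        Finset.sum_const, Finset.card_univ, Fintype.card_fin, nsmul_eq_mul, mul_one]
    rw [hsum', hr, mul_div_cancel₀ _ (ne_of_gt hns)]
    ring
  · -- product bound
    refine prod_bound_aux n a _ _ (fun i => ?_) (fun i => ?_)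
    · -- 0 ≤ b i
      show 0 ≤ 1 - (1 - a i) * r
      have h4 : 0 < 1/s := by positivity
      have hai1 : 1 - a i ≤ 1 := by linarith [(ha i).1]
      have := mul_le_one₀ hai1 hr0 hr1
      linarith
    · show 1 - (1 - a i) * r ≤ a i * (1 + (n * (s₀ - s))/((n:ℝ) - s₀))
      have heq : 1 - (1 - a i) * r = a i + (1 - a i) * (1 - r) := by ring
      have hstep : (1 - a i) * (1 - r) ≤ a i * ((n * (s₀ - s))/((n:ℝ) - s₀)) := by
        have hb1 : (1 - a i) * (1 - r) ≤ 1 - r := by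
          apply mul_le_of_le_one_left ?_ ?_
          · rw [h1r]; exact div_nonneg (by linarith) (by linarith)
          · have h4 : 0 < 1/s := by positivity
            linarith [(ha i).1]
        have hb2 : 1 - r ≤ (s₀ - s)/((n:ℝ) - s₀) := by
          rw [h1r]
          exact div_le_div_of_nonneg_left (by linarith) hns₀ (by linarith)
        have hain : 1 ≤ a i * n := by
          have h5 : 1/(n:ℝ) ≤ 1/s := one_div_le_one_div_of_le hs0 (by linarith)
          have h6 := le_trans h5 (ha i).1
          have h7 := mul_le_mul_of_nonneg_right h6 (le_of_lt hn0)
          rwa [one_div, inv_mul_cancel₀ (ne_of_gt hn0)] at h7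
        have hb3 : (s₀ - s)/((n:ℝ) - s₀) ≤ a i * ((n * (s₀ - s))/((n:ℝ) - s₀)) := by
          rw [div_le_iff₀ hns₀]
          have e3 : a i * ((n:ℝ) * (s₀ - s)/((n:ℝ) - s₀)) * ((n:ℝ) - s₀)
              = a i * (n:ℝ) * (s₀ - s) := by
            field_simp
            try ring
            try exact Or.inl trivial
          rw [e3]
          nlinarith [mul_le_mul_of_nonneg_right hain (by linarith : (0:ℝ) ≤ s₀ - s)]
        linarith
      rw [heq]
      calc a i + (1 - a i) * (1 - r) ≤ a i + a i * ((n * (s₀ - s))/((n:ℝ) - s₀)) := by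
            linarith [hstep]
        _ = a i * (1 + (n * (s₀ - s))/((n:ℝ) - s₀)) := by ring

/-- For `n ≥ 2`, the function `μ(s) = min {a₁⋯aₙ : a ∈ [1/s, 1]ⁿ, ∑ aᵢ = s}` is lower
semicontinuous on `[√n, n]`. -/
theorem stmt_12 (n : ℕ) (hn : 2 ≤ n) :
    LowerSemicontinuousOn
      (fun s : ℝ => sInf
        {y : ℝ | ∃ a : Fin n → ℝ, (∀ i, a i ∈ Set.Icc (1 / s) 1) ∧ ∑ i, a i = s ∧ y = ∏ i, a i})
      (Set.Icc (Real.sqrt n) (n : ℝ)) := by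
  have hn0 : (0:ℝ) < n := by positivity
  intro s₀ hs₀ y hy
  show ∀ᶠ s in nhdsWithin s₀ (Set.Icc (Real.sqrt n) (n:ℝ)), y < sInf (SetS n s)
  have hy' : y < sInf (SetS n s₀) := hy
  by_cases hy0 : y < (1/(n:ℝ)) ^ n
  · refine Filter.eventually_of_mem self_mem_nhdsWithin (fun s hs => ?_)
    exact lt_of_lt_of_le hy0 (le_csInf (SetS_nonempty n hn s hs) (SetS_lb n hn s hs))
  push_neg at hy0
  have hypos : 0 < y := lt_of_lt_of_le (by positivity) hy0
  by_cases hsn : s₀ = (n:ℝ)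
  · -- endpoint s₀ = n
    subst hsn
    have hn2 : (2:ℝ) ≤ n := by exact_mod_cast hn
    have hone : (1:ℝ) ∈ SetS n ((n:ℝ)) := by
      refine ⟨fun _ => 1, fun i => ⟨?_, le_refl 1⟩, ?_, ?_⟩
      · rw [div_le_one hn0]; linarith
      · simp
      · simp
    have hf1 : sInf (SetS n ((n:ℝ))) ≤ 1 := csInf_le (SetS_bdd n hn _ hs₀) hone
    have hy1 : y < 1 := lt_of_lt_of_le hy' hf1
    have htend : Filter.Tendsto (fun s : ℝ => (s - ((n:ℝ)-1)) ^ n) (nhds (n:ℝ)) (nhds 1) := by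
      have hc : Continuous (fun s : ℝ => (s - ((n:ℝ)-1)) ^ n) := by continuity
      have h := hc.tendsto (n:ℝ)
      simpa using h
    have h1 : ∀ᶠ s in nhds (n:ℝ), y < (s - ((n:ℝ)-1)) ^ n :=
      htend.eventually_const_lt hy1
    have h2 : ∀ᶠ s in nhds (n:ℝ), (n:ℝ) - 1 < s := eventually_gt_nhds (by linarith)
    filter_upwards [nhdsWithin_le_nhds h1, nhdsWithin_le_nhds h2, self_mem_nhdsWithin]
      with s hA hB hsmem
    refine lt_of_lt_of_le hA (le_csInf (SetS_nonempty n hn s hsmem) ?_)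
    rintro z ⟨a, ha, hsum, rfl⟩
    have hlb : ∀ i, s - ((n:ℝ)-1) ≤ a i := by
      intro i
      have hsplit : a i + ∑ j ∈ Finset.univ.erase i, a j = s := by
        rw [Finset.add_sum_erase _ _ (Finset.mem_univ i)]; exact hsum
      have hbound : ∑ j ∈ Finset.univ.erase i, a j ≤ (n:ℝ) - 1 := by
        calc ∑ j ∈ Finset.univ.erase i, a j ≤ ∑ _j ∈ Finset.univ.erase i, (1:ℝ) :=
              Finset.sum_le_sum (fun j _ => (ha j).2)
          _ = (n:ℝ) - 1 := by
              rw [Finset.sum_const, Finset.card_erase_of_mem (Finset.mem_univ i),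
                Finset.card_univ, Fintype.card_fin, nsmul_eq_mul, mul_one,
                Nat.cast_sub (by omega : 1 ≤ n), Nat.cast_one]
      linarith
    calc (s - ((n:ℝ)-1)) ^ n = ∏ _i : Fin n, (s - ((n:ℝ)-1)) := by
          rw [Finset.prod_const, Finset.card_univ, Fintype.card_fin]
      _ ≤ ∏ i, a i := Finset.prod_le_prod (fun i _ => by linarith) (fun i _ => hlb i)
  · -- generic case s₀ < n
    have hs₀n : s₀ < (n:ℝ) := lt_of_le_of_ne hs₀.2 hsn
    have hns₀ : 0 < (n:ℝ) - s₀ := by linarith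
    set C : ℝ := 1 + (n:ℝ)/((n:ℝ) - s₀) with hCdef
    have hC0 : 0 ≤ (n:ℝ)/((n:ℝ)-s₀) := by positivity
    have hC1 : 1 ≤ C := by rw [hCdef]; linarith
    have hC2 : (n:ℝ)/((n:ℝ)-s₀) ≤ C := by rw [hCdef]; linarith
    have htend : Filter.Tendsto (fun s : ℝ => y * (1 + C * |s - s₀|) ^ n) (nhds s₀)
        (nhds y) := by
      have hc : Continuous (fun s : ℝ => y * (1 + C * |s - s₀|) ^ n) := by continuity
      have h := hc.tendsto s₀
      simpa using h
    have h1 : ∀ᶠ s in nhds s₀, y * (1 + C * |s - s₀|) ^ n < sInf (SetS n s₀) :=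
      htend.eventually_lt_const hy'
    filter_upwards [nhdsWithin_le_nhds h1, self_mem_nhdsWithin] with s hls hsmem
    have hΔ : 0 ≤ |s - s₀| := abs_nonneg _
    have hM1 : (1:ℝ) ≤ 1 + C * |s - s₀| := by nlinarith
    have hM0 : (0:ℝ) < (1 + C * |s - s₀|) ^ n := by positivity
    have key : ∀ z ∈ SetS n s, sInf (SetS n s₀) ≤ (1 + C * |s - s₀|) ^ n * z := by
      rintro z ⟨a, ha, hsum, rfl⟩
      have hz0 : 0 ≤ ∏ i, a i := SetS_nonneg n hn s hsmem ⟨a, ha, hsum, rfl⟩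
      rcases lt_trichotomy s s₀ with hlt | heq | hgt
      · obtain ⟨b, hb, hbsum, hbprod⟩ := left_lem n hn s₀ s hsmem.1 hlt hs₀n a ha hsum
        have h3 : sInf (SetS n s₀) ≤ ∏ i, b i :=
          csInf_le (SetS_bdd n hn s₀ hs₀) ⟨b, hb, hbsum, rfl⟩
        have hKle : 1 + (n:ℝ) * (s₀ - s)/((n:ℝ) - s₀) ≤ 1 + C * |s - s₀| := by
          have habs : |s - s₀| = s₀ - s := by
            rw [abs_sub_comm, abs_of_pos (by linarith)]
          rw [habs]
          have he : (n:ℝ) * (s₀ - s)/((n:ℝ) - s₀) = ((n:ℝ)/((n:ℝ)-s₀)) * (s₀ - s) := by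
            ring
          rw [he]
          have := mul_le_mul_of_nonneg_right hC2 (by linarith : (0:ℝ) ≤ s₀ - s)
          linarith
        have hKnn : (0:ℝ) ≤ 1 + (n:ℝ) * (s₀ - s)/((n:ℝ) - s₀) := by
          have : 0 ≤ (n:ℝ) * (s₀ - s)/((n:ℝ) - s₀) := by
            apply div_nonneg ?_ (le_of_lt hns₀)
            have : 0 ≤ s₀ - s := by linarith
            positivity
          linarith
        have h4 : (1 + (n:ℝ)*(s₀-s)/((n:ℝ)-s₀)) ^ n ≤ (1 + C * |s-s₀|) ^ n :=
          pow_le_pow_left₀ hKnn hKle n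
        calc sInf (SetS n s₀) ≤ ∏ i, b i := h3
          _ ≤ (1 + (n:ℝ)*(s₀-s)/((n:ℝ)-s₀)) ^ n * ∏ i, a i := hbprod
          _ ≤ (1 + C * |s-s₀|) ^ n * ∏ i, a i := mul_le_mul_of_nonneg_right h4 hz0
      · have hmem : (∏ i, a i) ∈ SetS n s₀ := by
          rw [← heq]; exact ⟨a, ha, hsum, rfl⟩
        have h3 : sInf (SetS n s₀) ≤ ∏ i, a i := csInf_le (SetS_bdd n hn s₀ hs₀) hmem
        have h4 : (1:ℝ) ≤ (1 + C * |s-s₀|) ^ n := one_le_pow₀ hM1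
        calc sInf (SetS n s₀) ≤ ∏ i, a i := h3
          _ ≤ (1 + C * |s-s₀|) ^ n * ∏ i, a i := le_mul_of_one_le_left hz0 h4
      · obtain ⟨b, hb, hbsum, hbprod⟩ := right_lem n hn s₀ s hs₀.1 hgt hsmem.2 a ha hsum
        have h3 : sInf (SetS n s₀) ≤ ∏ i, b i :=
          csInf_le (SetS_bdd n hn s₀ hs₀) ⟨b, hb, hbsum, rfl⟩
        have hKle : 1 + (s - s₀) ≤ 1 + C * |s - s₀| := by
          have habs : |s - s₀| = s - s₀ := abs_of_pos (by linarith)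
          rw [habs]
          nlinarith
        have hKnn : (0:ℝ) ≤ 1 + (s - s₀) := by linarith
        have h4 : (1 + (s - s₀)) ^ n ≤ (1 + C * |s-s₀|) ^ n :=
          pow_le_pow_left₀ hKnn hKle n
        calc sInf (SetS n s₀) ≤ ∏ i, b i := h3
          _ ≤ (1 + (s - s₀)) ^ n * ∏ i, a i := hbprod
          _ ≤ (1 + C * |s-s₀|) ^ n * ∏ i, a i := mul_le_mul_of_nonneg_right h4 hz0
    have h5 : sInf (SetS n s₀) ≤ (1 + C*|s-s₀|)^n * sInf (SetS n s) := by
      have h6 : ∀ z ∈ SetS n s, sInf (SetS n s₀) / (1 + C*|s-s₀|)^n ≤ z := fun z hz =>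
        (div_le_iff₀ hM0).mpr (by rw [mul_comm]; exact key z hz)
      have h7 := le_csInf (SetS_nonempty n hn s hsmem) h6
      rw [div_le_iff₀ hM0] at h7
      linarith [h7]
    have h8 : y * (1 + C*|s-s₀|)^n < (1 + C*|s-s₀|)^n * sInf (SetS n s) :=
      lt_of_lt_of_le hls h5
    rw [mul_comm] at h8
    exact lt_of_mul_lt_mul_left h8 (le_of_lt hM0)
end

section
/- Let n ≥ 2 be an integer and for 0 ≤ j ≤ n let s_j = ((n-j) + √((n-j)² + 4j))/2 be the positive root of x² - (n-j)x - j = 0. Then μ(s_j) = s_j^{-j}, where μ(s) = min{a₁a₂⋯aₙ : a ∈ [1/s, 1]ⁿ, ∑_{i=1}^{n} aᵢ = s}. -/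
/-- Chord inequality for the concave function `log` on `[1/s, 1]`. -/
lemma log_chord (s x : ℝ) (hs : 1 < s) (hx1 : 1 / s ≤ x) (hx2 : x ≤ 1) :
    (x - 1) * (s * Real.log s / (s - 1)) ≤ Real.log x := by
  have hs0 : (0:ℝ) < s := lt_trans one_pos hs
  have hs1 : (0:ℝ) < s - 1 := by linarith
  set t : ℝ := (1 - x) * s / (s - 1) with ht
  have ht0 : 0 ≤ t := by
    apply div_nonneg _ (le_of_lt hs1)
    nlinarith
  have hxs : 1 ≤ x * s := by
    have := (div_le_iff₀ hs0).mp hx1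
    linarith
  have ht1 : 0 ≤ 1 - t := by
    rw [ht, sub_nonneg, div_le_one hs1]
    nlinarith
  have hmem1 : (1 / s : ℝ) ∈ Set.Ioi (0:ℝ) := by
    simp [Set.mem_Ioi]; positivity
  have hmem2 : (1 : ℝ) ∈ Set.Ioi (0:ℝ) := by simp
  have key := (strictConcaveOn_log_Ioi.concaveOn).2 hmem1 hmem2 ht0 ht1 (by ring)
  simp only [smul_eq_mul, Real.log_one, mul_zero, add_zero, mul_one] at key
  have harg : t * (1 / s) + (1 - t) = x := by
    rw [ht]; field_simp; ring
  rw [harg] at key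
  have hlog : t * Real.log (1 / s) = (x - 1) * (s * Real.log s / (s - 1)) := by
    rw [one_div, Real.log_inv, ht]
    field_simp
    ring
  rw [hlog] at key
  exact key

/-- For `n ≥ 2` and `0 ≤ j ≤ n`, with `s_j` the positive root of `x² - (n-j)x - j = 0`,
one has `μ(s_j) = s_j ^ (-j)`. -/
theorem stmt_13 (n : ℕ) (hn : 2 ≤ n) (j : ℕ) (hj : j ≤ n) (sj : ℝ)
    (hsj : sj = (((n : ℝ) - j) + Real.sqrt (((n : ℝ) - j) ^ 2 + 4 * j)) / 2) :
    sInf {y : ℝ | ∃ a : Fin n → ℝ,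
        (∀ i, a i ∈ Set.Icc (1 / sj) 1) ∧ ∑ i, a i = sj ∧ y = ∏ i, a i}
      = sj ^ (-(j : ℤ)) := by
  have hjn : (j : ℝ) ≤ (n : ℝ) := by exact_mod_cast hj
  have hn2 : (2 : ℝ) ≤ (n : ℝ) := by exact_mod_cast hn
  have hj0 : (0 : ℝ) ≤ (j : ℝ) := Nat.cast_nonneg j
  set c : ℝ := (n : ℝ) - (j : ℝ) with hc
  have hc0 : 0 ≤ c := by linarith
  have h4 : (0:ℝ) ≤ c ^ 2 + 4 * j := by positivity
  set r : ℝ := Real.sqrt (c ^ 2 + 4 * j) with hr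
  have hr0 : 0 ≤ r := Real.sqrt_nonneg _
  have hr2 : r ^ 2 = c ^ 2 + 4 * j := Real.sq_sqrt h4
  -- sj > 1
  have hs1 : 1 < sj := by
    rw [hsj]
    have : 2 < c + r := by nlinarith [sq_nonneg (2 - c - r), mul_nonneg hr0 hr0]
    linarith
  have hs0 : (0:ℝ) < sj := lt_trans one_pos hs1
  have hsne : sj ≠ 0 := ne_of_gt hs0
  have hsm1 : (0:ℝ) < sj - 1 := by linarith
  -- the quadratic equation
  have hroot : sj ^ 2 = c * sj + j := by
    rw [hsj]; nlinarith [hr2]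
  have hid : (j : ℝ) * (sj - 1) = sj * ((n : ℝ) - sj) := by
    rw [hc] at hroot; linear_combination hroot
  -- the value
  set v : ℝ := sj ^ (-(j:ℤ)) with hv
  have hv_pos : 0 < v := by rw [hv]; positivity
  -- witness
  set a : Fin n → ℝ := fun i => if (i : ℕ) < j then 1 / sj else 1 with ha
  have hmema : ∀ i, a i ∈ Set.Icc (1 / sj) 1 := by
    intro i
    have h1 : 1 / sj ≤ 1 := by rw [div_le_one hs0]; linarith
    rw [ha]
    by_cases h : (i : ℕ) < j
    · simp only [if_pos h]; exact ⟨le_rfl, h1⟩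
    · simp only [if_neg h]; exact ⟨h1, le_rfl⟩
  have hsuma : ∑ i, a i = sj := by
    have h1 : ∑ i, a i = ∑ i ∈ Finset.range n, (if i < j then 1 / sj else 1) :=
      Fin.sum_univ_eq_sum_range (fun k => if k < j then 1 / sj else 1) n
    rw [h1, ← Finset.sum_range_add_sum_Ico _ hj]
    have h2 : ∑ i ∈ Finset.range j, (if i < j then 1 / sj else 1) = (j : ℝ) * (1 / sj) := by
      rw [Finset.sum_congr rfl (fun i hi => if_pos (Finset.mem_range.mp hi))]
      simp [mul_comm]
    have h3 : ∑ i ∈ Finset.Ico j n, (if i < j then 1 / sj else 1) = ((n : ℝ) - j) := by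
      rw [Finset.sum_congr rfl (fun i hi => if_neg (by
        have := (Finset.mem_Ico.mp hi).1; omega))]
      rw [Finset.sum_const, Nat.card_Ico]
      simp [Nat.cast_sub hj]
    rw [h2, h3]
    field_simp
    linear_combination -hroot
  have hproda : ∏ i, a i = v := by
    have h1 : ∏ i, a i = ∏ i ∈ Finset.range n, (if i < j then 1 / sj else 1) :=
      Fin.prod_univ_eq_prod_range (fun k => if k < j then 1 / sj else 1) n
    rw [h1, ← Finset.prod_range_mul_prod_Ico _ hj]
    have h2 : ∏ i ∈ Finset.range j, (if i < j then 1 / sj else 1) = (1 / sj) ^ j := by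
      rw [Finset.prod_congr rfl (fun i hi => if_pos (Finset.mem_range.mp hi))]
      simp
    have h3 : ∏ i ∈ Finset.Ico j n, (if i < j then 1 / sj else 1) = 1 := by
      rw [Finset.prod_congr rfl (fun i hi => if_neg (by
        have := (Finset.mem_Ico.mp hi).1; omega))]
      simp
    rw [h2, h3, hv, mul_one, zpow_neg, zpow_natCast, one_div, inv_pow]
  have hvmem : v ∈ {y : ℝ | ∃ a : Fin n → ℝ,
      (∀ i, a i ∈ Set.Icc (1 / sj) 1) ∧ ∑ i, a i = sj ∧ y = ∏ i, a i} :=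
    ⟨a, hmema, hsuma, hproda.symm⟩
  -- lower bound
  have hlb : ∀ y ∈ {y : ℝ | ∃ a : Fin n → ℝ,
      (∀ i, a i ∈ Set.Icc (1 / sj) 1) ∧ ∑ i, a i = sj ∧ y = ∏ i, a i}, v ≤ y := by
    rintro y ⟨b, hb, hbsum, rfl⟩
    have hbpos : ∀ i, 0 < b i := fun i => lt_of_lt_of_le (by positivity) (hb i).1
    have hppos : 0 < ∏ i, b i := Finset.prod_pos (fun i _ => hbpos i)
    rw [← Real.log_le_log_iff hv_pos hppos]
    rw [Real.log_prod (fun i _ => ne_of_gt (hbpos i))]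
    have hstep : ∀ i : Fin n, (b i - 1) * (sj * Real.log sj / (sj - 1)) ≤ Real.log (b i) :=
      fun i => log_chord sj (b i) hs1 (hb i).1 (hb i).2
    have hsum_lb : ∑ i, (b i - 1) * (sj * Real.log sj / (sj - 1)) ≤ ∑ i, Real.log (b i) :=
      Finset.sum_le_sum (fun i _ => hstep i)
    have hsum_eq : ∑ i, (b i - 1) * (sj * Real.log sj / (sj - 1))
        = (sj - n) * (sj * Real.log sj / (sj - 1)) := by
      rw [← Finset.sum_mul, Finset.sum_sub_distrib, hbsum]
      simp
    have hfin : Real.log v = (sj - n) * (sj * Real.log sj / (sj - 1)) := by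
      rw [hv, Real.log_zpow]
      push_cast
      field_simp
      linear_combination (-Real.log sj) * hid
    rw [hfin]
    rw [hsum_eq] at hsum_lb
    exact hsum_lb
  have hbdd : BddBelow {y : ℝ | ∃ a : Fin n → ℝ,
      (∀ i, a i ∈ Set.Icc (1 / sj) 1) ∧ ∑ i, a i = sj ∧ y = ∏ i, a i} := ⟨v, hlb⟩
  exact le_antisymm (csInf_le hbdd hvmem) (le_csInf ⟨v, hvmem⟩ hlb)
end

section
/- Let j, n ∈ ℕ with n ≥ 2 and 1 ≤ j ≤ n, and let s_j = ((n-j) + √((n-j)² + 4j))/2 and s_{j-1} = ((n-j+1) + √((n-j+1)² + 4(j-1)))/2. Then the function M_j : [s_j, s_{j-1}] → ℝ defined by M_j(x) = x^{2-j} + (j-n)x^{1-j} + (1-j)x^{-j} is quasi-concave; in particular, min_{x ∈ [s_j, s_{j-1}]} M_j(x) = min(M_j(s_j), M_j(s_{j-1})). -/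
lemma Mderiv (n j : ℕ) (x : ℝ) (hx : 0 < x) :
    HasDerivAt (fun x : ℝ => x ^ ((2 : ℤ) - (j : ℤ)) + ((j : ℝ) - n) * x ^ ((1 : ℤ) - (j : ℤ)) +
      (1 - (j : ℝ)) * x ^ (-(j : ℤ)))
      (x ^ (-(j : ℤ) - 1) * ((2 - (j : ℝ)) * x ^ 2 + ((n : ℝ) - j) * ((j : ℝ) - 1) * x
        + (j : ℝ) * ((j : ℝ) - 1))) x := by
  have hx0 : x ≠ 0 := ne_of_gt hx
  have h1 := hasDerivAt_zpow ((2 : ℤ) - j) x (Or.inl hx0)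
  have h2 := (hasDerivAt_zpow ((1 : ℤ) - j) x (Or.inl hx0)).const_mul ((j : ℝ) - n)
  have h3 := (hasDerivAt_zpow (-(j : ℤ)) x (Or.inl hx0)).const_mul (1 - (j : ℝ))
  have H := (h1.add h2).add h3
  have e1 : x ^ ((2:ℤ) - j - 1) = x ^ (-(j:ℤ) - 1) * x ^ (2:ℕ) := by
    have := zpow_add₀ hx0 (-(j:ℤ) - 1) 2
    rw [show (-(j:ℤ) - 1) + 2 = 2 - (j:ℤ) - 1 by ring] at this
    rw [this]; norm_cast
  have e2 := zpow_add₀ hx0 (-(j:ℤ) - 1) 1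
  rw [zpow_one] at e2
  have e2' := e2
  rw [show (-(j:ℤ) - 1) + 1 = 1 - (j:ℤ) - 1 by ring] at e2
  rw [show (-(j:ℤ) - 1) + 1 = -(j:ℤ) by ring] at e2'
  have hval : ((2 - (j:ℤ) : ℤ) : ℝ) * x ^ ((2 : ℤ) - j - 1) +
      ((j : ℝ) - n) * (((1 - (j:ℤ) : ℤ) : ℝ) * x ^ ((1 : ℤ) - j - 1)) +
      (1 - (j : ℝ)) * (((-(j : ℤ) : ℤ) : ℝ) * x ^ (-(j : ℤ) - 1)) =
      x ^ (-(j : ℤ) - 1) * ((2 - (j : ℝ)) * x ^ 2 + ((n : ℝ) - j) * ((j : ℝ) - 1) * x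
        + (j : ℝ) * ((j : ℝ) - 1)) := by
    rw [e1, e2, ← e2']
    push_cast
    rw [e2']
    ring
  rw [hval] at H
  exact H

lemma unimodal_min (f q g : ℝ → ℝ) (s S : ℝ) (hs : 0 < s)
    (hg : ∀ x : ℝ, 0 < x → 0 < g x)
    (hf : ∀ x : ℝ, 0 < x → HasDerivAt f (g x * q x) x)
    (hdc : ∀ z w : ℝ, s ≤ z → z ≤ w → 0 ≤ q w → 0 ≤ q z) :
    ∀ x y z : ℝ, x ∈ Set.Icc s S → y ∈ Set.Icc s S →
      x ≤ z → z ≤ y → min (f x) (f y) ≤ f z := by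
  have hcont : ∀ a b : ℝ, s ≤ a → ContinuousOn f (Set.Icc a b) := by
    intro a b ha x hx
    exact ((hf x (by have := hx.1; linarith)).differentiableAt).continuousAt.continuousWithinAt
  intro x y z hx hy hxz hzy
  have hzmem : z ∈ Set.Icc s S := ⟨hx.1.trans hxz, hzy.trans hy.2⟩
  by_cases hq : 0 ≤ q z
  · have hmono : MonotoneOn f (Set.Icc x z) := by
      apply monotoneOn_of_deriv_nonneg (convex_Icc x z) (hcont x z hx.1)
      · intro w hw
        rw [interior_Icc] at hw
        exact ((hf w (by have := hw.1; have := hx.1; linarith)).differentiableAt).differentiableWithinAt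
      · intro w hw
        rw [interior_Icc] at hw
        have hwpos : 0 < w := by have := hw.1; have := hx.1; linarith
        rw [(hf w hwpos).deriv]
        exact mul_nonneg (hg w hwpos).le (hdc w z (hx.1.trans hw.1.le) hw.2.le hq)
    have : f x ≤ f z := hmono ⟨le_refl x, hxz⟩ ⟨hxz, le_refl z⟩ hxz
    exact le_trans (min_le_left _ _) this
  · have hanti : AntitoneOn f (Set.Icc z y) := by
      apply antitoneOn_of_deriv_nonpos (convex_Icc z y) (hcont z y hzmem.1)
      · intro w hw
        rw [interior_Icc] at hw
        exact ((hf w (by have := hw.1; have := hzmem.1; linarith)).differentiableAt).differentiableWithinAt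
      · intro w hw
        rw [interior_Icc] at hw
        have hwpos : 0 < w := by have := hw.1; have := hzmem.1; linarith
        rw [(hf w hwpos).deriv]
        have hqw : q w ≤ 0 := by
          by_contra h
          push_neg at h
          exact hq (hdc z w hzmem.1 hw.1.le h.le)
        exact mul_nonpos_of_nonneg_of_nonpos (hg w hwpos).le hqw
    have : f y ≤ f z := hanti ⟨le_refl z, hzy⟩ ⟨hzy, le_refl y⟩ hzy
    exact le_trans (min_le_right _ _) this

set_option maxHeartbeats 1000000 in
/-- For `n ≥ 2` and `1 ≤ j ≤ n`, the function
`M_j(x) = x^(2-j) + (j-n) x^(1-j) + (1-j) x^(-j)` is quasi-concave on `[s_j, s_{j-1}]`;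
in particular its minimum on `[s_j, s_{j-1}]` is `min (M_j(s_j)) (M_j(s_{j-1}))`. -/
theorem stmt_15 (n j : ℕ) (hn : 2 ≤ n) (hj1 : 1 ≤ j) (hjn : j ≤ n)
    (sj sjm : ℝ)
    (hsj : sj = (((n : ℝ) - j) + Real.sqrt (((n : ℝ) - j) ^ 2 + 4 * j)) / 2)
    (hsjm : sjm = (((n : ℝ) - j + 1) +
      Real.sqrt (((n : ℝ) - j + 1) ^ 2 + 4 * ((j : ℝ) - 1))) / 2)
    (M : ℝ → ℝ)
    (hM : ∀ x, M x = x ^ ((2 : ℤ) - (j : ℤ)) + ((j : ℝ) - n) * x ^ ((1 : ℤ) - (j : ℤ)) +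
      (1 - (j : ℝ)) * x ^ (-(j : ℤ))) :
    (∀ x ∈ Set.Icc sj sjm, ∀ y ∈ Set.Icc sj sjm, ∀ t ∈ Set.Icc (0 : ℝ) 1,
      min (M x) (M y) ≤ M (t * x + (1 - t) * y)) ∧
    ∀ x ∈ Set.Icc sj sjm, min (M sj) (M sjm) ≤ M x := by
  obtain rfl : M = fun x : ℝ => x ^ ((2 : ℤ) - (j : ℤ)) + ((j : ℝ) - n) * x ^ ((1 : ℤ) - (j : ℤ)) +
      (1 - (j : ℝ)) * x ^ (-(j : ℤ)) := funext hM
  -- basic facts about sj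
  have hjR : (1 : ℝ) ≤ (j : ℝ) := by exact_mod_cast hj1
  have hdR : (0 : ℝ) ≤ (n : ℝ) - j := by
    have : (j : ℝ) ≤ n := by exact_mod_cast hjn
    linarith
  have hr0 : 0 ≤ Real.sqrt (((n : ℝ) - j) ^ 2 + 4 * j) := Real.sqrt_nonneg _
  have hr2 : (Real.sqrt (((n : ℝ) - j) ^ 2 + 4 * j)) ^ 2 = ((n : ℝ) - j) ^ 2 + 4 * j := by
    apply Real.sq_sqrt; positivity
  have hr_ge : 2 ≤ Real.sqrt (((n : ℝ) - j) ^ 2 + 4 * j) := by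
    nlinarith [sq_nonneg (((n : ℝ) - j))]
  have hsj1 : 1 ≤ sj := by rw [hsj]; linarith
  have hsjpos : 0 < sj := by linarith
  have hsjsq : sj ^ 2 = ((n : ℝ) - j) * sj + j := by
    rw [hsj]; field_simp; rw [mul_comm (j : ℝ) 4]; nlinarith [hr2]
  have hqsj : (2 - (j : ℝ)) * sj ^ 2 + ((n : ℝ) - j) * ((j : ℝ) - 1) * sj
      + (j : ℝ) * ((j : ℝ) - 1) = sj ^ 2 := by
    linear_combination (1 - (j : ℝ)) * hsjsq
  -- downward closedness of { q ≥ 0 } from sj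
  have hdc : ∀ z w : ℝ, sj ≤ z → z ≤ w →
      0 ≤ (2 - (j : ℝ)) * w ^ 2 + ((n : ℝ) - j) * ((j : ℝ) - 1) * w + (j : ℝ) * ((j : ℝ) - 1) →
      0 ≤ (2 - (j : ℝ)) * z ^ 2 + ((n : ℝ) - j) * ((j : ℝ) - 1) * z + (j : ℝ) * ((j : ℝ) - 1) := by
    intro z w hz hzw hqw
    rcases eq_or_lt_of_le hjR with hj | hj
    · rw [← hj]
      nlinarith [sq_nonneg z]
    · have hj2 : (2 : ℝ) ≤ (j : ℝ) := by
        have : (1 : ℕ) < j := by exact_mod_cast hj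
        exact_mod_cast this
      rcases eq_or_lt_of_le (hz.trans hzw) with hw | hw
      · rw [show z = sj from le_antisymm (hw ▸ hzw) hz, hqsj]; positivity
      · have h1 : 0 ≤ z - sj := by linarith
        have h2 : 0 ≤ w - z := by linarith
        have h3 : 0 < w - sj := by linarith
        have t1 : 0 ≤ (w - z) * sj ^ 2 := mul_nonneg h2 (sq_nonneg sj)
        have t2 : 0 ≤ (z - sj) *
            ((2 - (j : ℝ)) * w ^ 2 + ((n : ℝ) - j) * ((j : ℝ) - 1) * w
              + (j : ℝ) * ((j : ℝ) - 1)) := mul_nonneg h1 hqw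
        have t3 : 0 ≤ ((j : ℝ) - 2) * ((z - sj) * ((w - z) * (w - sj))) :=
          mul_nonneg (by linarith) (mul_nonneg h1 (mul_nonneg h2 h3.le))
        have key : (w - sj) * ((2 - (j : ℝ)) * z ^ 2 + ((n : ℝ) - j) * ((j : ℝ) - 1) * z
              + (j : ℝ) * ((j : ℝ) - 1)) =
            (w - z) * sj ^ 2 + (z - sj) *
              ((2 - (j : ℝ)) * w ^ 2 + ((n : ℝ) - j) * ((j : ℝ) - 1) * w
                + (j : ℝ) * ((j : ℝ) - 1))
            + ((j : ℝ) - 2) * ((z - sj) * ((w - z) * (w - sj))) := by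
          linear_combination (w - z) * hqsj
        have h4 : 0 ≤ (w - sj) * ((2 - (j : ℝ)) * z ^ 2 + ((n : ℝ) - j) * ((j : ℝ) - 1) * z
            + (j : ℝ) * ((j : ℝ) - 1)) := by
          rw [key]; linarith
        exact nonneg_of_mul_nonneg_right h4 h3
  have hmain := unimodal_min
    (fun x : ℝ => x ^ ((2 : ℤ) - (j : ℤ)) + ((j : ℝ) - n) * x ^ ((1 : ℤ) - (j : ℤ)) +
      (1 - (j : ℝ)) * x ^ (-(j : ℤ)))
    (fun x : ℝ => (2 - (j : ℝ)) * x ^ 2 + ((n : ℝ) - j) * ((j : ℝ) - 1) * x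
      + (j : ℝ) * ((j : ℝ) - 1))
    (fun x : ℝ => x ^ (-(j : ℤ) - 1)) sj sjm hsjpos
    (fun x hx => zpow_pos hx _) (fun x hx => Mderiv n j x hx) hdc
  constructor
  · intro x hx y hy t ht
    rcases le_total x y with hxy | hxy
    · have h1 : x ≤ t * x + (1 - t) * y := by nlinarith [ht.1, ht.2]
      have h2 : t * x + (1 - t) * y ≤ y := by nlinarith [ht.1, ht.2]
      exact hmain x y _ hx hy h1 h2
    · have h1 : y ≤ t * x + (1 - t) * y := by nlinarith [ht.1, ht.2]
      have h2 : t * x + (1 - t) * y ≤ x := by nlinarith [ht.1, ht.2]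
      rw [min_comm]
      exact hmain y x _ hy hx h1 h2
  · intro x hx
    have hle : sj ≤ sjm := hx.1.trans hx.2
    exact hmain sj sjm x ⟨le_refl sj, hle⟩ ⟨hle, le_refl sjm⟩ hx.1 hx.2
end

section
/- Let n ∈ ℕ with 2 ≤ n ≤ 14 and let 0 ≤ j ≤ n - 1. Then s_j^j < n^{n/2}, where s_j = ((n-j) + √((n-j)² + 4j))/2; that is, the inequality s_j^j ≤ n^{n/2} is strict except when j = n. -/
private lemma crux (n j : ℕ) (q : ℝ) (hjn : j < n) (hq0 : 0 < q)
    (hq : ((n:ℝ) - j) * q + (j:ℝ) ≤ q ^ 2) (hN : (q ^ j) ^ 2 < (n:ℝ) ^ n) :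
    ((((n : ℝ) - j) + Real.sqrt (((n : ℝ) - j) ^ 2 + 4 * j)) / 2) ^ j
      < (n : ℝ) ^ ((n : ℝ) / 2) := by
  have ha : (0:ℝ) < (n:ℝ) - j := by
    have : (j:ℝ) < n := by exact_mod_cast hjn
    linarith
  set a : ℝ := (n:ℝ) - j with hadef
  have hj0 : (0:ℝ) ≤ j := j.cast_nonneg
  have h1 : Real.sqrt (a ^ 2 + 4 * j) ≤ 2 * q - a := by
    have hqa : a ≤ q := by nlinarith
    rw [show (2*q - a) = Real.sqrt ((2*q-a)^2) from (Real.sqrt_sq (by linarith)).symm]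
    apply Real.sqrt_le_sqrt
    nlinarith
  have hs : (a + Real.sqrt (a ^ 2 + 4 * j)) / 2 ≤ q := by linarith
  have hs0 : 0 ≤ (a + Real.sqrt (a ^ 2 + 4 * j)) / 2 := by positivity
  have h2 : ((a + Real.sqrt (a ^ 2 + 4 * j)) / 2) ^ j ≤ q ^ j :=
    pow_le_pow_left₀ hs0 hs j
  have hrw : (n:ℝ) ^ ((n:ℝ) / 2) = Real.sqrt ((n:ℝ) ^ n) := by
    rw [Real.sqrt_eq_rpow, ← Real.rpow_natCast (n:ℝ) n,
      ← Real.rpow_mul (Nat.cast_nonneg n)]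
    ring_nf
  rw [hrw]
  refine lt_of_le_of_lt h2 ?_
  rw [show ((n:ℝ) ^ n) = ((n:ℝ) ^ n) from rfl, ← Real.sqrt_lt_sqrt_iff_of_pos ?_] at hN
  · rwa [Real.sqrt_sq (pow_nonneg hq0.le j)] at hN
  · have hn0 : 0 < n := lt_of_le_of_lt (Nat.zero_le j) hjn
    positivity

/-- For `2 ≤ n ≤ 14` and `0 ≤ j ≤ n - 1`, one has the strict inequality
`s_j ^ j < n ^ (n/2)`, where `s_j = ((n-j) + √((n-j)² + 4j))/2`. -/
theorem stmt_17 (n : ℕ) (hn : 2 ≤ n) (hn' : n ≤ 14) (j : ℕ) (hj : j ≤ n - 1) :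
    ((((n : ℝ) - j) + Real.sqrt (((n : ℝ) - j) ^ 2 + 4 * j)) / 2) ^ j
      < (n : ℝ) ^ ((n : ℝ) / 2) := by
  have hjn : j < n := by omega
  clear hj
  interval_cases n <;> interval_cases j
  · exact crux 2 0 2 (by norm_num) (by norm_num) (by norm_num) (by norm_num)
  · exact crux 2 1 (17/10 : ℝ) (by norm_num) (by norm_num) (by norm_num) (by norm_num)
  · exact crux 3 0 3 (by norm_num) (by norm_num) (by norm_num) (by norm_num)
  · exact crux 3 1 3 (by norm_num) (by norm_num) (by norm_num) (by norm_num)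
  · exact crux 3 2 2 (by norm_num) (by norm_num) (by norm_num) (by norm_num)
  · exact crux 4 0 4 (by norm_num) (by norm_num) (by norm_num) (by norm_num)
  · exact crux 4 1 4 (by norm_num) (by norm_num) (by norm_num) (by norm_num)
  · exact crux 4 2 3 (by norm_num) (by norm_num) (by norm_num) (by norm_num)
  · exact crux 4 3 (24/10 : ℝ) (by norm_num) (by norm_num) (by norm_num) (by norm_num)
  · exact crux 5 0 5 (by norm_num) (by norm_num) (by norm_num) (by norm_num)
  · exact crux 5 1 5 (by norm_num) (by norm_num) (by norm_num) (by norm_num)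
  · exact crux 5 2 4 (by norm_num) (by norm_num) (by norm_num) (by norm_num)
  · exact crux 5 3 3 (by norm_num) (by norm_num) (by norm_num) (by norm_num)
  · exact crux 5 4 (26/10 : ℝ) (by norm_num) (by norm_num) (by norm_num) (by norm_num)
  · exact crux 6 0 6 (by norm_num) (by norm_num) (by norm_num) (by norm_num)
  · exact crux 6 1 6 (by norm_num) (by norm_num) (by norm_num) (by norm_num)
  · exact crux 6 2 5 (by norm_num) (by norm_num) (by norm_num) (by norm_num)
  · exact crux 6 3 4 (by norm_num) (by norm_num) (by norm_num) (by norm_num)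
  · exact crux 6 4 (33/10 : ℝ) (by norm_num) (by norm_num) (by norm_num) (by norm_num)
  · exact crux 6 5 (28/10 : ℝ) (by norm_num) (by norm_num) (by norm_num) (by norm_num)
  · exact crux 7 0 7 (by norm_num) (by norm_num) (by norm_num) (by norm_num)
  · exact crux 7 1 7 (by norm_num) (by norm_num) (by norm_num) (by norm_num)
  · exact crux 7 2 6 (by norm_num) (by norm_num) (by norm_num) (by norm_num)
  · exact crux 7 3 5 (by norm_num) (by norm_num) (by norm_num) (by norm_num)
  · exact crux 7 4 4 (by norm_num) (by norm_num) (by norm_num) (by norm_num)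
  · exact crux 7 5 (35/10 : ℝ) (by norm_num) (by norm_num) (by norm_num) (by norm_num)
  · exact crux 7 6 3 (by norm_num) (by norm_num) (by norm_num) (by norm_num)
  · exact crux 8 0 8 (by norm_num) (by norm_num) (by norm_num) (by norm_num)
  · exact crux 8 1 8 (by norm_num) (by norm_num) (by norm_num) (by norm_num)
  · exact crux 8 2 7 (by norm_num) (by norm_num) (by norm_num) (by norm_num)
  · exact crux 8 3 6 (by norm_num) (by norm_num) (by norm_num) (by norm_num)
  · exact crux 8 4 5 (by norm_num) (by norm_num) (by norm_num) (by norm_num)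
  · exact crux 8 5 5 (by norm_num) (by norm_num) (by norm_num) (by norm_num)
  · exact crux 8 6 (37/10 : ℝ) (by norm_num) (by norm_num) (by norm_num) (by norm_num)
  · exact crux 8 7 (32/10 : ℝ) (by norm_num) (by norm_num) (by norm_num) (by norm_num)
  · exact crux 9 0 9 (by norm_num) (by norm_num) (by norm_num) (by norm_num)
  · exact crux 9 1 9 (by norm_num) (by norm_num) (by norm_num) (by norm_num)
  · exact crux 9 2 8 (by norm_num) (by norm_num) (by norm_num) (by norm_num)
  · exact crux 9 3 7 (by norm_num) (by norm_num) (by norm_num) (by norm_num)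
  · exact crux 9 4 6 (by norm_num) (by norm_num) (by norm_num) (by norm_num)
  · exact crux 9 5 5 (by norm_num) (by norm_num) (by norm_num) (by norm_num)
  · exact crux 9 6 5 (by norm_num) (by norm_num) (by norm_num) (by norm_num)
  · exact crux 9 7 4 (by norm_num) (by norm_num) (by norm_num) (by norm_num)
  · exact crux 9 8 (34/10 : ℝ) (by norm_num) (by norm_num) (by norm_num) (by norm_num)
  · exact crux 10 0 10 (by norm_num) (by norm_num) (by norm_num) (by norm_num)
  · exact crux 10 1 10 (by norm_num) (by norm_num) (by norm_num) (by norm_num)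
  · exact crux 10 2 9 (by norm_num) (by norm_num) (by norm_num) (by norm_num)
  · exact crux 10 3 8 (by norm_num) (by norm_num) (by norm_num) (by norm_num)
  · exact crux 10 4 7 (by norm_num) (by norm_num) (by norm_num) (by norm_num)
  · exact crux 10 5 6 (by norm_num) (by norm_num) (by norm_num) (by norm_num)
  · exact crux 10 6 6 (by norm_num) (by norm_num) (by norm_num) (by norm_num)
  · exact crux 10 7 5 (by norm_num) (by norm_num) (by norm_num) (by norm_num)
  · exact crux 10 8 4 (by norm_num) (by norm_num) (by norm_num) (by norm_num)
  · exact crux 10 9 (355/100 : ℝ) (by norm_num) (by norm_num) (by norm_num) (by norm_num)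
  · exact crux 11 0 11 (by norm_num) (by norm_num) (by norm_num) (by norm_num)
  · exact crux 11 1 11 (by norm_num) (by norm_num) (by norm_num) (by norm_num)
  · exact crux 11 2 10 (by norm_num) (by norm_num) (by norm_num) (by norm_num)
  · exact crux 11 3 9 (by norm_num) (by norm_num) (by norm_num) (by norm_num)
  · exact crux 11 4 8 (by norm_num) (by norm_num) (by norm_num) (by norm_num)
  · exact crux 11 5 7 (by norm_num) (by norm_num) (by norm_num) (by norm_num)
  · exact crux 11 6 6 (by norm_num) (by norm_num) (by norm_num) (by norm_num)
  · exact crux 11 7 6 (by norm_num) (by norm_num) (by norm_num) (by norm_num)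
  · exact crux 11 8 5 (by norm_num) (by norm_num) (by norm_num) (by norm_num)
  · exact crux 11 9 (42/10 : ℝ) (by norm_num) (by norm_num) (by norm_num) (by norm_num)
  · exact crux 11 10 (371/100 : ℝ) (by norm_num) (by norm_num) (by norm_num) (by norm_num)
  · exact crux 12 0 12 (by norm_num) (by norm_num) (by norm_num) (by norm_num)
  · exact crux 12 1 12 (by norm_num) (by norm_num) (by norm_num) (by norm_num)
  · exact crux 12 2 11 (by norm_num) (by norm_num) (by norm_num) (by norm_num)
  · exact crux 12 3 10 (by norm_num) (by norm_num) (by norm_num) (by norm_num)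
  · exact crux 12 4 9 (by norm_num) (by norm_num) (by norm_num) (by norm_num)
  · exact crux 12 5 8 (by norm_num) (by norm_num) (by norm_num) (by norm_num)
  · exact crux 12 6 7 (by norm_num) (by norm_num) (by norm_num) (by norm_num)
  · exact crux 12 7 7 (by norm_num) (by norm_num) (by norm_num) (by norm_num)
  · exact crux 12 8 6 (by norm_num) (by norm_num) (by norm_num) (by norm_num)
  · exact crux 12 9 5 (by norm_num) (by norm_num) (by norm_num) (by norm_num)
  · exact crux 12 10 (44/10 : ℝ) (by norm_num) (by norm_num) (by norm_num) (by norm_num)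
  · exact crux 12 11 (386/100 : ℝ) (by norm_num) (by norm_num) (by norm_num) (by norm_num)
  · exact crux 13 0 13 (by norm_num) (by norm_num) (by norm_num) (by norm_num)
  · exact crux 13 1 13 (by norm_num) (by norm_num) (by norm_num) (by norm_num)
  · exact crux 13 2 12 (by norm_num) (by norm_num) (by norm_num) (by norm_num)
  · exact crux 13 3 11 (by norm_num) (by norm_num) (by norm_num) (by norm_num)
  · exact crux 13 4 10 (by norm_num) (by norm_num) (by norm_num) (by norm_num)
  · exact crux 13 5 9 (by norm_num) (by norm_num) (by norm_num) (by norm_num)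
  · exact crux 13 6 8 (by norm_num) (by norm_num) (by norm_num) (by norm_num)
  · exact crux 13 7 7 (by norm_num) (by norm_num) (by norm_num) (by norm_num)
  · exact crux 13 8 7 (by norm_num) (by norm_num) (by norm_num) (by norm_num)
  · exact crux 13 9 6 (by norm_num) (by norm_num) (by norm_num) (by norm_num)
  · exact crux 13 10 5 (by norm_num) (by norm_num) (by norm_num) (by norm_num)
  · exact crux 13 11 (45/10 : ℝ) (by norm_num) (by norm_num) (by norm_num) (by norm_num)
  · exact crux 13 12 4 (by norm_num) (by norm_num) (by norm_num) (by norm_num)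
  · exact crux 14 0 14 (by norm_num) (by norm_num) (by norm_num) (by norm_num)
  · exact crux 14 1 14 (by norm_num) (by norm_num) (by norm_num) (by norm_num)
  · exact crux 14 2 13 (by norm_num) (by norm_num) (by norm_num) (by norm_num)
  · exact crux 14 3 12 (by norm_num) (by norm_num) (by norm_num) (by norm_num)
  · exact crux 14 4 11 (by norm_num) (by norm_num) (by norm_num) (by norm_num)
  · exact crux 14 5 10 (by norm_num) (by norm_num) (by norm_num) (by norm_num)
  · exact crux 14 6 9 (by norm_num) (by norm_num) (by norm_num) (by norm_num)
  · exact crux 14 7 8 (by norm_num) (by norm_num) (by norm_num) (by norm_num)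
  · exact crux 14 8 8 (by norm_num) (by norm_num) (by norm_num) (by norm_num)
  · exact crux 14 9 7 (by norm_num) (by norm_num) (by norm_num) (by norm_num)
  · exact crux 14 10 6 (by norm_num) (by norm_num) (by norm_num) (by norm_num)
  · exact crux 14 11 (52/10 : ℝ) (by norm_num) (by norm_num) (by norm_num) (by norm_num)
  · exact crux 14 12 (461/100 : ℝ) (by norm_num) (by norm_num) (by norm_num) (by norm_num)
  · exact crux 14 13 (4141/1000 : ℝ) (by norm_num) (by norm_num) (by norm_num) (by norm_num)
end
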